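/- arXiv:1205.3189 — 8 statements merged into one kernel-verified Lean document; each statement's English description precedes it below -/
import Mathlib

section
/- Let p > 1 and C₁ > 0. There is a constant C (depending only on p and C₁) such that for every function φ : ℝ → ℝ with |φ(t)| ≤ C₁ (1+|t|)^{−p} for all t ∈ ℝ, every integer j ≥ 0, every integer l, and every θ ∈ ℝ, the periodized sum satisfies Σ_{k∈ℤ} |φ(2^j θ − l + 2^j k)| ≤ C (1 + D)^{−(p−1)}, where D := inf_{k∈ℤ} |2^j θ − l + 2^j k|. -/
open Finset

lemma keyB {q a b : ℝ} (hq : 0 < q) (ha : 0 < a) (hab : a ≤ b) :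
    q * (b - a) * b ^ (-(q+1)) ≤ a ^ (-q) - b ^ (-q) := by
  have hb : 0 < b := ha.trans_le hab
  set s : ℝ := b / a with hsdef
  have hs : (1:ℝ) ≤ s := (one_le_div ha).mpr hab
  have hs0 : (0:ℝ) ≤ s := by linarith
  have hconj : (q+1).HolderConjugate (Real.conjExponent (q+1)) :=
    Real.HolderConjugate.conjExponent (by linarith)
  have hy := Real.young_inequality_of_nonneg hs0 zero_le_one hconj
  rw [Real.one_rpow, Real.conjExponent] at hy
  have hq1 : q + 1 - 1 = q := by ring
  rw [hq1] at hy
  have hy' : (q + 1) * s ≤ s ^ (q+1) + q := by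
    have h2 : (1:ℝ) / ((q+1)/q) = q / (q+1) := by field_simp
    rw [h2, mul_one] at hy
    have := mul_le_mul_of_nonneg_left hy (by linarith : (0:ℝ) ≤ q+1)
    calc (q+1) * s ≤ (q+1) * (s ^ (q+1) / (q+1) + q / (q+1)) := this
      _ = s ^ (q+1) + q := by field_simp
  have hAa : a ^ (q+1) = a ^ q * a := by rw [Real.rpow_add ha, Real.rpow_one]
  have hsa : s * a = b := div_mul_cancel₀ b ha.ne'
  have hsp : s ^ (q+1) * a ^ (q+1) = b ^ (q+1) := by
    rw [hsdef, Real.div_rpow hb.le ha.le, div_mul_cancel₀]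
    positivity
  have hApos : (0:ℝ) < a ^ q := Real.rpow_pos_of_pos ha q
  have hBpos : (0:ℝ) < b ^ q := Real.rpow_pos_of_pos hb q
  have hBb : b ^ (q+1) = b ^ q * b := by rw [Real.rpow_add hb, Real.rpow_one]
  have h4 : (q+1) * b * a ^ q ≤ b ^ q * b + q * (a ^ q * a) := by
    have h3 := mul_le_mul_of_nonneg_right hy'
      (by positivity : (0:ℝ) ≤ a ^ (q+1))
    calc (q+1) * b * a ^ q = (q+1) * s * a ^ (q+1) := by rw [hAa, ← hsa]; ring
      _ ≤ (s ^ (q+1) + q) * a ^ (q+1) := h3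
      _ = b ^ q * b + q * (a ^ q * a) := by rw [add_mul, hsp, hBb, hAa]
  have hkey : q * (b - a) * a ^ q ≤ b * (b ^ q - a ^ q) := by nlinarith [h4]
  have e1 : a ^ (-q) = (a ^ q)⁻¹ := by rw [Real.rpow_neg ha.le]
  have e2 : b ^ (-q) = (b ^ q)⁻¹ := by rw [Real.rpow_neg hb.le]
  have e3 : b ^ (-(q+1)) = (b ^ q * b)⁻¹ := by rw [Real.rpow_neg hb.le, hBb]
  rw [e1, e2, e3, inv_sub_inv hApos.ne' hBpos.ne', ← div_eq_mul_inv,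
    div_le_div_iff₀ (by positivity) (by positivity)]
  nlinarith [mul_le_mul_of_nonneg_right hkey hBpos.le]

lemma teleA (p c : ℝ) (hp : 1 < p) (hc : 1 ≤ c) (N : ℕ) :
    ∑ n ∈ Finset.range N, (c + ((n:ℝ)+1)/4) ^ (-p) ≤ 4/(p-1) * c ^ (-(p-1)) := by
  have hq : 0 < p - 1 := by linarith
  set F : ℕ → ℝ := fun n => (c + (n:ℝ)/4) ^ (-(p-1)) with hF
  have hstep : ∀ n : ℕ, (c + ((n:ℝ)+1)/4) ^ (-p) ≤ 4/(p-1) * (F n - F (n+1)) := by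
    intro n
    have ha : (0:ℝ) < c + (n:ℝ)/4 := by positivity
    have hab : c + (n:ℝ)/4 ≤ c + ((n:ℝ)+1)/4 := by linarith
    have h := keyB hq ha hab
    have hsub : (c + ((n:ℝ)+1)/4) - (c + (n:ℝ)/4) = 1/4 := by ring
    rw [hsub] at h
    have hpe : p - 1 + 1 = p := by ring
    rw [hpe] at h
    have : F n - F (n+1) ≥ (p-1) * (1/4) * (c + ((n:ℝ)+1)/4) ^ (-p) := by
      simp only [hF]
      push_cast
      linarith [h]
    calc (c + ((n:ℝ)+1)/4) ^ (-p)
        = 4/(p-1) * ((p-1) * (1/4) * (c + ((n:ℝ)+1)/4) ^ (-p)) := by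
          field_simp
      _ ≤ 4/(p-1) * (F n - F (n+1)) := by
          apply mul_le_mul_of_nonneg_left this (by positivity)
  calc ∑ n ∈ Finset.range N, (c + ((n:ℝ)+1)/4) ^ (-p)
      ≤ ∑ n ∈ Finset.range N, 4/(p-1) * (F n - F (n+1)) :=
        Finset.sum_le_sum fun n _ => hstep n
    _ = 4/(p-1) * (F 0 - F N) := by rw [← Finset.mul_sum, Finset.sum_range_sub' F N]
    _ ≤ 4/(p-1) * F 0 := by
        have : (0:ℝ) ≤ F N := Real.rpow_nonneg (by positivity) _
        have h48 : (0:ℝ) ≤ 4/(p-1) := by positivity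
        nlinarith
    _ = 4/(p-1) * c ^ (-(p-1)) := by simp [hF]

lemma sum_nat_le (p c : ℝ) (hp : 1 < p) (hc : 1 ≤ c) (u : Finset ℕ)
    (hu : ∀ n ∈ u, n ≠ 0) :
    ∑ n ∈ u, (c + (n:ℝ)/4) ^ (-p) ≤ 4/(p-1) * c ^ (-(p-1)) := by
  classical
  set N := u.sup id with hN
  have hinj : ∀ a ∈ Finset.range N, ∀ b ∈ Finset.range N,
      Nat.succ a = Nat.succ b → a = b := fun a _ b _ h => Nat.succ_injective h
  have hsub : u ⊆ (Finset.range N).image Nat.succ := by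
    intro n hn
    have h1 : 1 ≤ n := Nat.one_le_iff_ne_zero.mpr (hu n hn)
    have h2 : n ≤ N := Finset.le_sup (f := id) hn
    simp only [Finset.mem_image, Finset.mem_range]
    exact ⟨n - 1, by omega, by omega⟩
  calc ∑ n ∈ u, (c + (n:ℝ)/4) ^ (-p)
      ≤ ∑ n ∈ (Finset.range N).image Nat.succ, (c + (n:ℝ)/4) ^ (-p) :=
        Finset.sum_le_sum_of_subset_of_nonneg hsub
          (fun n _ _ => Real.rpow_nonneg (by positivity) _)
    _ = ∑ n ∈ Finset.range N, (c + ((n:ℝ)+1)/4) ^ (-p) := by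
        rw [Finset.sum_image hinj]
        exact Finset.sum_congr rfl fun n _ => by push_cast; ring_nf
    _ ≤ 4/(p-1) * c ^ (-(p-1)) := teleA p c hp hc N

lemma sum_int_le (p c : ℝ) (hp : 1 < p) (hc : 1 ≤ c) (t : Finset ℤ)
    (ht : ∀ m ∈ t, m ≠ 0) :
    ∑ m ∈ t, (c + |(m:ℝ)|/4) ^ (-p) ≤ 8/(p-1) * c ^ (-(p-1)) := by
  classical
  have habs : ∀ m : ℤ, |(m:ℝ)| = (m.natAbs : ℝ) := by
    intro m
    rw [Nat.cast_natAbs, Int.cast_abs]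
  set tpos := t.filter (0 < ·) with htpos
  set tneg := t.filter (· < 0) with htneg
  have hsplit : t = tpos ∪ tneg := by
    ext m
    simp only [htpos, htneg, Finset.mem_union, Finset.mem_filter]
    constructor
    · intro hm
      rcases lt_trichotomy 0 m with h | h | h
      · exact Or.inl ⟨hm, h⟩
      · exact absurd h.symm (ht m hm)
      · exact Or.inr ⟨hm, h⟩
    · rintro (⟨hm, _⟩ | ⟨hm, _⟩) <;> exact hm
  have hdisj : Disjoint tpos tneg := by
    rw [Finset.disjoint_left]
    intro m h1 h2
    simp only [htpos, htneg, Finset.mem_filter] at h1 h2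
    exact absurd (h1.2.trans h2.2) (lt_irrefl _)
  have key : ∀ s : Finset ℤ, (∀ x ∈ s, ∀ y ∈ s, x.natAbs = y.natAbs → x = y) →
      (∀ x ∈ s, x ≠ 0) →
      ∑ m ∈ s, (c + |(m:ℝ)|/4) ^ (-p) ≤ 4/(p-1) * c ^ (-(p-1)) := by
    intro s hinj hs0
    calc ∑ m ∈ s, (c + |(m:ℝ)|/4) ^ (-p)
        = ∑ m ∈ s, (c + (m.natAbs:ℝ)/4) ^ (-p) :=
          Finset.sum_congr rfl fun m _ => by rw [habs]
      _ = ∑ n ∈ s.image Int.natAbs, (c + (n:ℝ)/4) ^ (-p) := by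
          rw [Finset.sum_image hinj]
      _ ≤ 4/(p-1) * c ^ (-(p-1)) := by
          apply sum_nat_le p c hp hc
          intro n hn
          simp only [Finset.mem_image] at hn
          obtain ⟨m, hm, rfl⟩ := hn
          simpa using hs0 m hm
  have hP := key tpos (fun x hx y hy h => by
      simp only [htpos, Finset.mem_filter] at hx hy; omega)
    (fun x hx => by simp only [htpos, Finset.mem_filter] at hx; omega)
  have hN2 := key tneg (fun x hx y hy h => by
      simp only [htneg, Finset.mem_filter] at hx hy; omega)
    (fun x hx => by simp only [htneg, Finset.mem_filter] at hx; omega)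
  rw [hsplit, Finset.sum_union hdisj]
  have h8 : (8:ℝ)/(p-1) * c ^ (-(p-1))
      = 4/(p-1) * c ^ (-(p-1)) + 4/(p-1) * c ^ (-(p-1)) := by ring
  linarith

/-- Decay estimate for periodized vaguelets: if `φ` decays like
`C₁ (1+|t|)^{-p}`, then its 1-periodization at dyadic scale `2^{-j}` and location `l 2^{-j}`
decays with exponent `p - 1` in the normalized circle distance
`D = inf_{k ∈ ℤ} |2^j θ - l + 2^j k|`. -/
theorem periodized_vaguelet_decay (p C₁ : ℝ) (hp : 1 < p) (hC₁ : 0 < C₁) :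
    ∃ C : ℝ, 0 < C ∧ ∀ φ : ℝ → ℝ,
      (∀ t : ℝ, |φ t| ≤ C₁ * (1 + |t|) ^ (-p)) →
      ∀ (j : ℕ) (l : ℤ) (θ : ℝ),
        (∑' k : ℤ, |φ ((2:ℝ) ^ j * θ - (l : ℝ) + (2:ℝ) ^ j * (k : ℝ))|) ≤
          C * (1 + ⨅ k : ℤ, |(2:ℝ) ^ j * θ - (l : ℝ) + (2:ℝ) ^ j * (k : ℝ)|) ^ (-(p - 1)) := by
  have hq : 0 < p - 1 := by linarith
  refine ⟨C₁ * (1 + 8/(p-1) * (2:ℝ) ^ (p-1)), by positivity, ?_⟩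
  intro φ hφ j l θ
  set T : ℝ := (2:ℝ) ^ j with hTdef
  have hT1 : (1:ℝ) ≤ T := one_le_pow₀ one_le_two
  have hT0 : (0:ℝ) < T := by linarith
  set x : ℝ := T * θ - (l:ℝ) with hxdef
  set D : ℝ := ⨅ k : ℤ, |x + T * (k:ℝ)| with hDdef
  have hbdd : BddBelow (Set.range fun k : ℤ => |x + T * (k:ℝ)|) := by
    refine ⟨0, ?_⟩
    rintro z ⟨k, rfl⟩
    exact abs_nonneg _
  have hD0 : 0 ≤ D := le_ciInf fun k => abs_nonneg _
  have hDle : ∀ k : ℤ, D ≤ |x + T * (k:ℝ)| := fun k => ciInf_le hbdd k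
  set k₀ : ℤ := -⌊x / T + 1/2⌋ with hk₀
  set y : ℝ := x + T * (k₀:ℝ) with hydef
  have hy2 : |y| ≤ T / 2 := by
    have h1 := Int.floor_le (x / T + 1/2)
    have h2 := Int.lt_floor_add_one (x / T + 1/2)
    have hxT : T * (x / T) = x := by field_simp
    rw [abs_le]
    constructor
    · have := mul_le_mul_of_nonneg_left h1 hT0.le
      rw [hydef, hk₀]
      push_cast
      nlinarith
    · have := mul_le_mul_of_nonneg_left h2.le hT0.le
      rw [hydef, hk₀]
      push_cast
      nlinarith
  have hDy : D ≤ |y| := hDle k₀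
  have hDT : D ≤ T / 2 := hDy.trans hy2
  set c' : ℝ := 1 + D/2 with hc'
  have hc'1 : (1:ℝ) ≤ c' := by rw [hc']; linarith
  set hfun : ℤ → ℝ := fun k =>
    if k = k₀ then C₁ * (1+D) ^ (-p) else C₁ * (c' + |((k - k₀ : ℤ):ℝ)|/4) ^ (-p)
    with hfdef
  have hfnn : ∀ k : ℤ, 0 ≤ hfun k := by
    intro k
    rw [hfdef]
    dsimp only
    split
    · have : (0:ℝ) < 1 + D := by linarith
      positivity
    · have : (0:ℝ) < c' + |((k - k₀ : ℤ):ℝ)|/4 := by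
        have := abs_nonneg ((k - k₀ : ℤ):ℝ); linarith
      positivity
  have hterm : ∀ k : ℤ, |φ (x + T * (k:ℝ))| ≤ hfun k := by
    intro k
    have h0 := hφ (x + T * (k:ℝ))
    rw [hfdef]
    dsimp only
    by_cases hk : k = k₀
    · rw [if_pos hk, hk, ← hydef]
      have h0' := hφ y
      refine h0'.trans (mul_le_mul_of_nonneg_left ?_ hC₁.le)
      apply Real.rpow_le_rpow_of_nonpos (by linarith) (by linarith [hDy]) (by linarith)
    · rw [if_neg hk]
      set m : ℤ := k - k₀ with hm
      have hm0 : m ≠ 0 := sub_ne_zero.mpr hk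
      have hm1 : (1:ℝ) ≤ |(m:ℝ)| := by
        rw [← Int.cast_abs]
        exact_mod_cast Int.one_le_abs hm0
      have heq : x + T * (k:ℝ) = y + T * (m:ℝ) := by
        rw [hydef, hm]; push_cast; ring
      have habs2 : T * |(m:ℝ)| - |y| ≤ |y + T * (m:ℝ)| := by
        have h3 : |T * (m:ℝ)| ≤ |y + T * (m:ℝ)| + |y| := by
          calc |T * (m:ℝ)| = |(y + T * (m:ℝ)) - y| := by ring_nf
            _ ≤ |y + T * (m:ℝ)| + |y| := abs_sub _ _
        rw [abs_mul, abs_of_pos hT0] at h3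
        linarith
      have hlow : c' + |(m:ℝ)|/4 ≤ 1 + |y + T * (m:ℝ)| := by
        rw [hc']
        nlinarith [mul_nonneg (sub_nonneg.mpr hT1) (sub_nonneg.mpr hm1)]
      refine h0.trans (mul_le_mul_of_nonneg_left ?_ hC₁.le)
      rw [heq]
      apply Real.rpow_le_rpow_of_nonpos ?_ hlow (by linarith)
      have := abs_nonneg ((m:ℤ):ℝ)
      have : (0:ℝ) ≤ |(m:ℝ)| := abs_nonneg _
      linarith
  have hrhs0 : (0:ℝ) ≤ (1 + D) ^ (-(p-1)) := Real.rpow_nonneg (by linarith) _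
  by_cases hsum : Summable fun k : ℤ => |φ (x + T * (k:ℝ))|
  · apply Summable.tsum_le_of_sum_le hsum
    intro s
    classical
    have step1 : ∑ k ∈ s, |φ (x + T * (k:ℝ))| ≤ ∑ k ∈ s, hfun k :=
      Finset.sum_le_sum fun k _ => hterm k
    have step2 : ∑ k ∈ s, hfun k ≤ ∑ k ∈ insert k₀ s, hfun k :=
      Finset.sum_le_sum_of_subset_of_nonneg (Finset.subset_insert _ _)
        (fun k _ _ => hfnn k)
    have step3 : ∑ k ∈ insert k₀ s, hfun k
        = hfun k₀ + ∑ k ∈ (insert k₀ s).erase k₀, hfun k :=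
      (Finset.add_sum_erase _ hfun (Finset.mem_insert_self _ _)).symm
    set s' := (insert k₀ s).erase k₀ with hs'
    have hs'ne : ∀ k ∈ s', k ≠ k₀ := fun k hk => (Finset.mem_erase.mp hk).1
    have step4 : ∑ k ∈ s', hfun k
        = C₁ * ∑ k ∈ s', (c' + |((k - k₀ : ℤ):ℝ)|/4) ^ (-p) := by
      rw [Finset.mul_sum]
      refine Finset.sum_congr rfl fun k hk => ?_
      rw [hfdef]
      dsimp only
      rw [if_neg (hs'ne k hk)]
    have step5 : ∑ k ∈ s', (c' + |((k - k₀ : ℤ):ℝ)|/4) ^ (-p)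
        ≤ 8/(p-1) * c' ^ (-(p-1)) := by
      have hre : ∑ k ∈ s', (c' + |((k - k₀ : ℤ):ℝ)|/4) ^ (-p)
          = ∑ m ∈ s'.image (· - k₀), (c' + |(m:ℝ)|/4) ^ (-p) := by
        rw [Finset.sum_image (fun a _ b _ h => by omega)]
      rw [hre]
      apply sum_int_le p c' hp hc'1
      intro m hm
      simp only [Finset.mem_image] at hm
      obtain ⟨k, hk, rfl⟩ := hm
      exact sub_ne_zero.mpr (hs'ne k hk)
    have hk₀bd : hfun k₀ ≤ C₁ * (1+D) ^ (-(p-1)) := by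
      rw [hfdef]
      dsimp only
      rw [if_pos rfl]
      refine mul_le_mul_of_nonneg_left ?_ hC₁.le
      exact Real.rpow_le_rpow_of_exponent_le (by linarith) (by linarith)
    have hc'bd : c' ^ (-(p-1)) ≤ (2:ℝ) ^ (p-1) * (1+D) ^ (-(p-1)) := by
      have hhalf : (1+D)/2 ≤ c' := by rw [hc']; linarith
      have h5 : c' ^ (-(p-1)) ≤ ((1+D)/2) ^ (-(p-1)) :=
        Real.rpow_le_rpow_of_nonpos (by linarith) hhalf (by linarith)
      have h6 : ((1+D)/2) ^ (-(p-1)) = (2:ℝ) ^ (p-1) * (1+D) ^ (-(p-1)) := by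
        have h7 : (2:ℝ) ^ (-(p-1)) = ((2:ℝ) ^ (p-1))⁻¹ :=
          Real.rpow_neg (by norm_num) _
        rw [Real.div_rpow (by linarith) (by norm_num), h7]
        rw [div_eq_mul_inv, inv_inv, mul_comm]
      linarith [h6 ▸ h5]
    have hsum5 : C₁ * ∑ k ∈ s', (c' + |((k - k₀ : ℤ):ℝ)|/4) ^ (-p)
        ≤ C₁ * (8/(p-1) * ((2:ℝ) ^ (p-1) * (1+D) ^ (-(p-1)))) := by
      refine mul_le_mul_of_nonneg_left ?_ hC₁.le
      refine step5.trans ?_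
      refine mul_le_mul_of_nonneg_left hc'bd (by positivity)
    calc ∑ k ∈ s, |φ (x + T * (k:ℝ))| ≤ hfun k₀ + ∑ k ∈ s', hfun k := by
          rw [← step3]; exact step1.trans step2
      _ ≤ C₁ * (1+D) ^ (-(p-1)) + C₁ * (8/(p-1) * ((2:ℝ) ^ (p-1) * (1+D) ^ (-(p-1)))) := by
          rw [step4] at *
          exact add_le_add hk₀bd hsum5
      _ = C₁ * (1 + 8/(p-1) * (2:ℝ) ^ (p-1)) * (1 + D) ^ (-(p-1)) := by ring
  · rw [tsum_eq_zero_of_not_summable hsum]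
    exact mul_nonneg (by positivity) hrhs0
end

section
/- Let m₀ : ℝ → ℂ be measurable with |m₀(ξ)|² + |m₀(ξ+π)|² = 1 for all ξ ∈ ℝ, and let F : ℝ → ℂ be bounded and measurable with F(2ξ) = m₀(ξ)·F(ξ) for all ξ ∈ ℝ. Then for every integer j: ∫_{2^j}^{2^{j+1}} |F(ξ)|²/ξ dξ = ∫_{2^j}^{2^{j+1}} |m₀(ξ+π)|²·|F(ξ)|²/ξ dξ + ∫_{2^{j+1}}^{2^{j+2}} |F(ξ)|²/ξ dξ. -/
open MeasureTheory

/-- One-block identity for a wavelet filter `m₀` (with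
`|m₀(ξ)|² + |m₀(ξ+π)|² = 1`) and a bounded measurable `F` satisfying the refinement
relation `F(2ξ) = m₀(ξ) F(ξ)`:
`∫_{2^j}^{2^{j+1}} |F|²/ξ = ∫_{2^j}^{2^{j+1}} |m₀(·+π)|²|F|²/ξ + ∫_{2^{j+1}}^{2^{j+2}} |F|²/ξ`. -/
theorem filter_block_identity (m₀ F : ℝ → ℂ)
    (hm₀ : Measurable m₀)
    (hunit : ∀ ξ : ℝ, ‖m₀ ξ‖ ^ 2 + ‖m₀ (ξ + Real.pi)‖ ^ 2 = 1)
    (hFmeas : Measurable F) (B : ℝ) (hFbdd : ∀ ξ : ℝ, ‖F ξ‖ ≤ B)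
    (href : ∀ ξ : ℝ, F (2 * ξ) = m₀ ξ * F ξ) (j : ℤ) :
    ∫ ξ in ((2:ℝ) ^ j)..((2:ℝ) ^ (j + 1)), ‖F ξ‖ ^ 2 / ξ =
      (∫ ξ in ((2:ℝ) ^ j)..((2:ℝ) ^ (j + 1)), ‖m₀ (ξ + Real.pi)‖ ^ 2 * ‖F ξ‖ ^ 2 / ξ) +
        ∫ ξ in ((2:ℝ) ^ (j + 1))..((2:ℝ) ^ (j + 2)), ‖F ξ‖ ^ 2 / ξ := by
  have hj : (0:ℝ) < 2 ^ j := zpow_pos (by norm_num) j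
  -- integrability of bounded measurable G times 1/ξ on the block
  have hint : ∀ G : ℝ → ℝ, Measurable G → (∀ ξ, |G ξ| ≤ B ^ 2) →
      IntervalIntegrable (fun ξ => G ξ / ξ) volume ((2:ℝ) ^ j) ((2:ℝ) ^ (j + 1)) := by
    intro G hGm hGb
    rw [intervalIntegrable_iff]
    refine Measure.integrableOn_of_bounded (M := B ^ 2 / 2 ^ j)
      (((measure_mono Set.uIoc_subset_uIcc).trans_lt measure_Icc_lt_top).ne)
      ((hGm.div measurable_id).aestronglyMeasurable)
      (ae_restrict_of_forall_mem measurableSet_uIoc ?_)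
    intro ξ hξ
    have hle : ((2:ℝ) ^ j) ≤ 2 ^ (j+1) :=
      zpow_le_zpow_right₀ (by norm_num) (by omega)
    rw [Set.uIoc_of_le hle] at hξ
    have hξ0 : (2:ℝ) ^ j < ξ := hξ.1
    have habs : |G ξ / ξ| = |G ξ| / ξ := by
      rw [abs_div, abs_of_pos (hj.trans hξ0)]
    rw [Real.norm_eq_abs, habs]
    exact div_le_div₀ (by positivity) (hGb ξ) hj (le_of_lt hξ0)
  have hB0 : 0 ≤ B := le_trans (norm_nonneg _) (hFbdd 0)
  have hm₀le : ∀ ξ, ‖m₀ ξ‖ ≤ 1 := by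
    intro ξ
    nlinarith [hunit ξ, norm_nonneg (m₀ ξ), norm_nonneg (m₀ (ξ + Real.pi)), sq_nonneg (‖m₀ ξ‖ - 1)]
  have habs : ∀ (c : ℝ → ℝ), (∀ ξ, 0 ≤ c ξ) → (∀ ξ, c ξ ≤ 1) → ∀ ξ, |c ξ * ‖F ξ‖ ^ 2| ≤ B ^ 2 := by
    intro c hc0 hc1 ξ
    rw [abs_of_nonneg (mul_nonneg (hc0 ξ) (sq_nonneg _))]
    calc c ξ * ‖F ξ‖ ^ 2 ≤ 1 * ‖F ξ‖ ^ 2 := by nlinarith [hc0 ξ, hc1 ξ, sq_nonneg ‖F ξ‖]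
    _ ≤ B ^ 2 := by nlinarith [hFbdd ξ, norm_nonneg (F ξ)]
  have h1 : IntervalIntegrable (fun ξ => ‖m₀ (ξ + Real.pi)‖ ^ 2 * ‖F ξ‖ ^ 2 / ξ) volume ((2:ℝ) ^ j) ((2:ℝ) ^ (j + 1)) :=
    hint _ (((hm₀.comp (measurable_id.add_const _)).norm.pow_const 2).mul (hFmeas.norm.pow_const 2))
      (habs _ (fun ξ => by positivity) (fun ξ => by nlinarith [hm₀le (ξ + Real.pi), norm_nonneg (m₀ (ξ + Real.pi))]))
  have h2 : IntervalIntegrable (fun ξ => ‖m₀ ξ‖ ^ 2 * ‖F ξ‖ ^ 2 / ξ) volume ((2:ℝ) ^ j) ((2:ℝ) ^ (j + 1)) :=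
    hint _ ((hm₀.norm.pow_const 2).mul (hFmeas.norm.pow_const 2))
      (habs _ (fun ξ => by positivity) (fun ξ => by nlinarith [hm₀le ξ, norm_nonneg (m₀ ξ)]))
  -- change of variables on the second integral
  have hcov : (∫ ξ in ((2:ℝ) ^ (j + 1))..((2:ℝ) ^ (j + 2)), ‖F ξ‖ ^ 2 / ξ)
      = ∫ ξ in ((2:ℝ) ^ j)..((2:ℝ) ^ (j + 1)), ‖m₀ ξ‖ ^ 2 * ‖F ξ‖ ^ 2 / ξ := by
    have key := intervalIntegral.smul_integral_comp_mul_left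
      (a := (2:ℝ) ^ j) (b := (2:ℝ) ^ (j+1)) (f := fun ξ => ‖F ξ‖ ^ 2 / ξ) 2
    have e1 : (2:ℝ) * 2 ^ j = 2 ^ (j+1) := by
      rw [zpow_add_one₀ (by norm_num : (2:ℝ) ≠ 0)]; ring
    have e2 : (2:ℝ) * 2 ^ (j+1) = 2 ^ (j+2) := by
      have : (2:ℝ) ^ (j+2) = 2 ^ (j+1) * 2 := by
        rw [show j + 2 = (j+1) + 1 by omega, zpow_add_one₀ (by norm_num : (2:ℝ) ≠ 0)]
      rw [this]; ring
    rw [e1, e2] at key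
    rw [← key, smul_eq_mul, ← intervalIntegral.integral_const_mul]
    congr 1; ext ξ
    rw [href ξ]
    rcases eq_or_ne ξ 0 with h | h
    · simp [h]
    · field_simp
      rw [norm_mul]; ring
  rw [hcov, ← intervalIntegral.integral_add h1 h2]
  congr 1; ext ξ
  have := hunit ξ
  rcases eq_or_ne ξ 0 with h | h
  · simp [h]
  · have h' := hunit ξ
    field_simp
    nlinarith [h', sq_nonneg ‖F ξ‖]
end

section
/- Let m₀ : ℝ → ℂ be measurable with |m₀(ξ)|² + |m₀(ξ+π)|² = 1 for all ξ ∈ ℝ, and let F : ℝ → ℂ be bounded and measurable with F(2ξ) = m₀(ξ)·F(ξ) for all ξ ∈ ℝ. Assume additionally that ∫_{2^J}^{2^{J+1}} |F(ξ)|²/ξ dξ → 0 as J → +∞. Then for every integer n: ∫_{2^{−n}}^{2^{−n+1}} |F(ξ)|²/ξ dξ = ∫_{2^{−n}}^{∞} |m₀(ξ+π)|²·|F(ξ)|²/ξ dξ. -/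
open MeasureTheory Filter

lemma aux_ii {f : ℝ → ℝ} (hf : Measurable f) {a b C : ℝ}
    (h : ∀ x ∈ Set.uIoc a b, |f x| ≤ C) : IntervalIntegrable f volume a b := by
  rw [intervalIntegrable_iff]
  apply Measure.integrableOn_of_bounded (M := C) measure_Ioc_lt_top.ne
    hf.aestronglyMeasurable
  filter_upwards [ae_restrict_mem measurableSet_uIoc] with x hx
  simpa using h x hx

lemma aux_block (m₀ F : ℝ → ℂ)
    (hm₀ : Measurable m₀)
    (hunit : ∀ ξ : ℝ, ‖m₀ ξ‖ ^ 2 + ‖m₀ (ξ + Real.pi)‖ ^ 2 = 1)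
    (hFmeas : Measurable F) (B : ℝ) (hFbdd : ∀ ξ : ℝ, ‖F ξ‖ ≤ B)
    (href : ∀ ξ : ℝ, F (2 * ξ) = m₀ ξ * F ξ) (j : ℤ) :
    (∫ ξ in ((2:ℝ) ^ j)..((2:ℝ) ^ (j + 1)), ‖F ξ‖ ^ 2 / ξ) =
      (∫ ξ in ((2:ℝ) ^ j)..((2:ℝ) ^ (j + 1)), ‖m₀ (ξ + Real.pi)‖ ^ 2 * ‖F ξ‖ ^ 2 / ξ)
      + ∫ ξ in ((2:ℝ) ^ (j + 1))..((2:ℝ) ^ (j + 1 + 1)), ‖F ξ‖ ^ 2 / ξ := by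
  have hB0 : 0 ≤ B := le_trans (norm_nonneg _) (hFbdd 0)
  have hm1 : ∀ ξ : ℝ, ‖m₀ ξ‖ ≤ 1 := by
    intro ξ
    nlinarith [hunit ξ, norm_nonneg (m₀ ξ), norm_nonneg (m₀ (ξ + Real.pi)), sq_nonneg (‖m₀ ξ‖ - 1)]
  have hpos : (0:ℝ) < (2:ℝ) ^ j := zpow_pos (by norm_num) _
  -- pointwise identity
  have key : ∀ ξ : ℝ, ‖F ξ‖ ^ 2 / ξ =
      ‖m₀ (ξ + Real.pi)‖ ^ 2 * ‖F ξ‖ ^ 2 / ξ + 2 * (‖F (2 * ξ)‖ ^ 2 / (2 * ξ)) := by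
    intro ξ
    rcases eq_or_ne ξ 0 with h | h
    · simp [h]
    · have h2 : ‖F (2 * ξ)‖ ^ 2 = ‖m₀ ξ‖ ^ 2 * ‖F ξ‖ ^ 2 := by
        rw [href, norm_mul]; ring
      rw [h2, ← mul_div_assoc, mul_div_mul_left _ _ (two_ne_zero : (2:ℝ) ≠ 0), ← add_div]
      congr 1
      linear_combination (-‖F ξ‖ ^ 2) * hunit ξ
  -- integrability
  have hle : ∀ {x : ℝ}, x ∈ Set.uIoc ((2:ℝ) ^ j) ((2:ℝ) ^ (j+1)) → (2:ℝ)^j < x := by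
    intro x hx
    rw [Set.uIoc_of_le (by gcongr <;> simp)] at hx
    exact hx.1
  have hb1 : ∀ x ∈ Set.uIoc ((2:ℝ) ^ j) ((2:ℝ) ^ (j+1)),
      |‖m₀ (x + Real.pi)‖ ^ 2 * ‖F x‖ ^ 2 / x| ≤ B ^ 2 / 2 ^ j := by
    intro x hx
    have hx1 := hle hx
    have hx0 : 0 < x := lt_trans hpos hx1
    rw [abs_of_nonneg (by positivity)]
    apply div_le_div₀ (by positivity) ?_ hpos hx1.le
    calc ‖m₀ (x + Real.pi)‖ ^ 2 * ‖F x‖ ^ 2 ≤ 1 * B ^ 2 := by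
          apply mul_le_mul ?_ ?_ (by positivity) (by norm_num)
          · nlinarith [hm1 (x + Real.pi), norm_nonneg (m₀ (x + Real.pi))]
          · nlinarith [hFbdd x, norm_nonneg (F x)]
      _ = B ^ 2 := one_mul _
  have hb2 : ∀ x ∈ Set.uIoc ((2:ℝ) ^ j) ((2:ℝ) ^ (j+1)),
      |2 * (‖F (2 * x)‖ ^ 2 / (2 * x))| ≤ B ^ 2 / 2 ^ j := by
    intro x hx
    have hx1 := hle hx
    have hx0 : 0 < x := lt_trans hpos hx1
    rw [abs_of_nonneg (by positivity), ← mul_div_assoc, mul_div_mul_left _ _ (two_ne_zero : (2:ℝ) ≠ 0)]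
    apply div_le_div₀ (by positivity) ?_ hpos hx1.le
    nlinarith [hFbdd (2*x), norm_nonneg (F (2*x))]
  have hmeasb : Measurable fun x : ℝ => ‖m₀ (x + Real.pi)‖ ^ 2 * ‖F x‖ ^ 2 / x :=
    (((hm₀.comp (measurable_id.add_const _)).norm.pow_const 2).mul
      (hFmeas.norm.pow_const 2)).div measurable_id
  have hmeask : Measurable fun x : ℝ => 2 * (‖F (2 * x)‖ ^ 2 / (2 * x)) :=
    (measurable_const.mul (((hFmeas.comp (measurable_const.mul measurable_id)).norm.pow_const 2).div
      (measurable_const.mul measurable_id)))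
  have i1 : IntervalIntegrable (fun x : ℝ => ‖m₀ (x + Real.pi)‖ ^ 2 * ‖F x‖ ^ 2 / x)
      volume ((2:ℝ) ^ j) ((2:ℝ) ^ (j+1)) := aux_ii hmeasb hb1
  have i2 : IntervalIntegrable (fun x : ℝ => 2 * (‖F (2 * x)‖ ^ 2 / (2 * x)))
      volume ((2:ℝ) ^ j) ((2:ℝ) ^ (j+1)) := aux_ii hmeask hb2
  calc (∫ ξ in ((2:ℝ) ^ j)..((2:ℝ) ^ (j + 1)), ‖F ξ‖ ^ 2 / ξ)
      = ∫ ξ in ((2:ℝ) ^ j)..((2:ℝ) ^ (j + 1)),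
        (‖m₀ (ξ + Real.pi)‖ ^ 2 * ‖F ξ‖ ^ 2 / ξ + 2 * (‖F (2 * ξ)‖ ^ 2 / (2 * ξ))) := by
        exact intervalIntegral.integral_congr (fun ξ _ => key ξ)
    _ = (∫ ξ in ((2:ℝ) ^ j)..((2:ℝ) ^ (j + 1)), ‖m₀ (ξ + Real.pi)‖ ^ 2 * ‖F ξ‖ ^ 2 / ξ)
        + ∫ ξ in ((2:ℝ) ^ j)..((2:ℝ) ^ (j + 1)), 2 * (‖F (2 * ξ)‖ ^ 2 / (2 * ξ)) :=
        intervalIntegral.integral_add i1 i2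
    _ = (∫ ξ in ((2:ℝ) ^ j)..((2:ℝ) ^ (j + 1)), ‖m₀ (ξ + Real.pi)‖ ^ 2 * ‖F ξ‖ ^ 2 / ξ)
        + ∫ ξ in ((2:ℝ) ^ (j + 1))..((2:ℝ) ^ (j + 1 + 1)), ‖F ξ‖ ^ 2 / ξ := by
        congr 1
        have := intervalIntegral.integral_comp_mul_left (a := (2:ℝ)^j) (b := (2:ℝ)^(j+1))
          (fun u => ‖F u‖ ^ 2 / u) (two_ne_zero)
        have e1 : (2:ℝ) * (2:ℝ) ^ j = (2:ℝ) ^ (j+1) := by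
          rw [zpow_add_one₀ (two_ne_zero : (2:ℝ) ≠ 0)]; ring
        have e2 : (2:ℝ) * (2:ℝ) ^ (j+1) = (2:ℝ) ^ (j+1+1) := by
          rw [zpow_add_one₀ (two_ne_zero : (2:ℝ) ≠ 0) (j+1)]; ring
        rw [intervalIntegral.integral_const_mul, this, e1, e2]
        simp

lemma aux_hmeas (m₀ F : ℝ → ℂ) (hm₀ : Measurable m₀) (hFmeas : Measurable F) :
    Measurable fun x : ℝ => ‖m₀ (x + Real.pi)‖ ^ 2 * ‖F x‖ ^ 2 / x :=
  (((hm₀.comp (measurable_id.add_const _)).norm.pow_const 2).mul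
    (hFmeas.norm.pow_const 2)).div measurable_id

lemma aux_intOn (m₀ F : ℝ → ℂ) (hm₀ : Measurable m₀)
    (hunit : ∀ ξ : ℝ, ‖m₀ ξ‖ ^ 2 + ‖m₀ (ξ + Real.pi)‖ ^ 2 = 1)
    (hFmeas : Measurable F) (B : ℝ) (hFbdd : ∀ ξ : ℝ, ‖F ξ‖ ≤ B) (j : ℤ) :
    IntegrableOn (fun x : ℝ => ‖m₀ (x + Real.pi)‖ ^ 2 * ‖F x‖ ^ 2 / x)
      (Set.Ioc ((2:ℝ) ^ j) ((2:ℝ) ^ (j + 1))) := by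
  have hpos : (0:ℝ) < (2:ℝ) ^ j := zpow_pos (by norm_num) _
  have hm1 : ∀ ξ : ℝ, ‖m₀ ξ‖ ≤ 1 := by
    intro ξ
    nlinarith [hunit ξ, norm_nonneg (m₀ ξ), norm_nonneg (m₀ (ξ + Real.pi)), sq_nonneg (‖m₀ ξ‖ - 1)]
  apply Measure.integrableOn_of_bounded (M := B ^ 2 / 2 ^ j) measure_Ioc_lt_top.ne
    (aux_hmeas m₀ F hm₀ hFmeas).aestronglyMeasurable
  filter_upwards [ae_restrict_mem measurableSet_Ioc] with x hx
  have hx1 : (2:ℝ) ^ j < x := hx.1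
  have hx0 : 0 < x := lt_trans hpos hx1
  rw [Real.norm_eq_abs, abs_of_nonneg (by positivity)]
  apply div_le_div₀ (by positivity) ?_ hpos hx1.le
  calc ‖m₀ (x + Real.pi)‖ ^ 2 * ‖F x‖ ^ 2 ≤ 1 * B ^ 2 := by
        apply mul_le_mul ?_ ?_ (by positivity) (by norm_num)
        · nlinarith [hm1 (x + Real.pi), norm_nonneg (m₀ (x + Real.pi))]
        · nlinarith [hFbdd x, norm_nonneg (F x)]
    _ = B ^ 2 := one_mul _

/-- Telescoped identity for a wavelet filter `m₀` and a bounded measurable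
`F` with `F(2ξ) = m₀(ξ) F(ξ)`, assuming the dyadic-block integrals tend to `0` at `+∞`:
`∫_{2^{-n}}^{2^{-n+1}} |F|²/ξ = ∫_{2^{-n}}^{∞} |m₀(·+π)|²|F|²/ξ` for every integer `n`. -/
theorem filter_telescoped_identity (m₀ F : ℝ → ℂ)
    (hm₀ : Measurable m₀)
    (hunit : ∀ ξ : ℝ, ‖m₀ ξ‖ ^ 2 + ‖m₀ (ξ + Real.pi)‖ ^ 2 = 1)
    (hFmeas : Measurable F) (B : ℝ) (hFbdd : ∀ ξ : ℝ, ‖F ξ‖ ≤ B)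
    (href : ∀ ξ : ℝ, F (2 * ξ) = m₀ ξ * F ξ)
    (hdecay : Tendsto (fun J : ℤ => ∫ ξ in ((2:ℝ) ^ J)..((2:ℝ) ^ (J + 1)), ‖F ξ‖ ^ 2 / ξ)
      atTop (nhds 0))
    (n : ℤ) :
    ∫ ξ in ((2:ℝ) ^ (-n))..((2:ℝ) ^ (-n + 1)), ‖F ξ‖ ^ 2 / ξ =
      ∫ ξ in Set.Ioi ((2:ℝ) ^ (-n)), ‖m₀ (ξ + Real.pi)‖ ^ 2 * ‖F ξ‖ ^ 2 / ξ := by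
  set a : ℤ → ℝ := fun j => ∫ ξ in ((2:ℝ) ^ j)..((2:ℝ) ^ (j + 1)), ‖F ξ‖ ^ 2 / ξ with ha
  set b : ℤ → ℝ := fun j =>
    ∫ ξ in ((2:ℝ) ^ j)..((2:ℝ) ^ (j + 1)), ‖m₀ (ξ + Real.pi)‖ ^ 2 * ‖F ξ‖ ^ 2 / ξ with hbdef
  have hposc : ∀ j : ℤ, (0:ℝ) < 2 ^ j := fun j => zpow_pos (by norm_num) _
  have hlec : ∀ j : ℤ, (2:ℝ) ^ j ≤ 2 ^ (j + 1) := fun j =>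
    zpow_le_zpow_right₀ one_le_two (by omega)
  have hblock : ∀ j, a j = b j + a (j + 1) := fun j =>
    aux_block m₀ F hm₀ hunit hFmeas B hFbdd href j
  have hbnn : ∀ j, 0 ≤ b j := by
    intro j
    apply intervalIntegral.integral_nonneg (hlec j)
    intro x hx
    exact div_nonneg (by positivity) (le_trans (hposc j).le hx.1)
  have hann : ∀ j, 0 ≤ a j := by
    intro j
    apply intervalIntegral.integral_nonneg (hlec j)
    intro x hx
    exact div_nonneg (by positivity) (le_trans (hposc j).le hx.1)
  have htel : ∀ N : ℕ, a (-n) = (∑ k ∈ Finset.range N, b (-n + k)) + a (-n + N) := by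
    intro N
    induction N with
    | zero => simp
    | succ N ih =>
      have harg : (-n + ((N + 1 : ℕ) : ℤ)) = (-n + N) + 1 := by push_cast; ring
      rw [Finset.sum_range_succ, ih, hblock (-n + N), harg]
      ring
  have htendA : Tendsto (fun N : ℕ => a (-n + (N:ℤ))) atTop (nhds 0) :=
    hdecay.comp (tendsto_atTop_add_const_left _ (-n) tendsto_natCast_atTop_atTop)
  have hsum : HasSum (fun k : ℕ => b (-n + k)) (a (-n)) := by
    rw [hasSum_iff_tendsto_nat_of_nonneg (fun k => hbnn _)]
    have heq : (fun N : ℕ => ∑ k ∈ Finset.range N, b (-n + k))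
        = fun N : ℕ => a (-n) - a (-n + N) := funext fun N => by rw [htel N]; ring
    rw [heq]
    simpa using tendsto_const_nhds.sub htendA
  set s : ℕ → Set ℝ := fun k => Set.Ioc ((2:ℝ) ^ (-n + (k:ℤ))) ((2:ℝ) ^ (-n + (k:ℤ) + 1))
    with hsdef
  have hsm : ∀ k, MeasurableSet (s k) := fun k => measurableSet_Ioc
  have hdkey : ∀ k l : ℕ, k < l → Disjoint (s k) (s l) := by
    intro k l hkl
    apply Set.Ioc_disjoint_Ioc.2
    refine le_trans (min_le_left _ _) (le_trans ?_ (le_max_right _ _))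
    exact zpow_le_zpow_right₀ one_le_two (by omega)
  have hdisj : Pairwise (Function.onFun Disjoint s) := fun k l h =>
    h.lt_or_gt.elim (hdkey k l) fun h' => (hdkey l k h').symm
  have hunion : (⋃ k, s k) = Set.Ioi ((2:ℝ) ^ (-n)) := by
    ext x
    simp only [hsdef, Set.mem_iUnion, Set.mem_Ioc, Set.mem_Ioi]
    constructor
    · rintro ⟨k, h1, h2⟩
      exact lt_of_le_of_lt (zpow_le_zpow_right₀ one_le_two (by omega)) h1
    · intro hx
      obtain ⟨m, hm1, hm2⟩ := exists_mem_Ioc_zpow (lt_trans (hposc _) hx) one_lt_two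
      have hnm : -n ≤ m := by
        by_contra hc
        push_neg at hc
        have : (2:ℝ) ^ (m + 1) ≤ 2 ^ (-n) := zpow_le_zpow_right₀ one_le_two (by omega)
        linarith [hm2, hx]
      refine ⟨(m + n).toNat, ?_⟩
      rw [show -n + (((m + n).toNat : ℤ)) = m by omega]
      exact ⟨hm1, hm2⟩
  have hbset : ∀ k : ℕ, (∫ ξ in s k, ‖m₀ (ξ + Real.pi)‖ ^ 2 * ‖F ξ‖ ^ 2 / ξ) = b (-n + k) :=
    fun k => (intervalIntegral.integral_of_le (hlec _)).symm
  have hIk : ∀ k : ℕ, IntegrableOn (fun x : ℝ => ‖m₀ (x + Real.pi)‖ ^ 2 * ‖F x‖ ^ 2 / x) (s k) :=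
    fun k => aux_intOn m₀ F hm₀ hunit hFmeas B hFbdd _
  have hIntOn : IntegrableOn (fun x : ℝ => ‖m₀ (x + Real.pi)‖ ^ 2 * ‖F x‖ ^ 2 / x) (⋃ k, s k) := by
    refine ⟨(aux_hmeas m₀ F hm₀ hFmeas).aestronglyMeasurable.restrict, ?_⟩
    have hnn : ∀ k : ℕ, ∀ x ∈ s k, 0 ≤ ‖m₀ (x + Real.pi)‖ ^ 2 * ‖F x‖ ^ 2 / x := by
      intro k x hx
      exact div_nonneg (by positivity) (le_trans (hposc _).le hx.1.le)
    have hlint : ∀ k : ℕ,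
        (∫⁻ x in s k, ‖‖m₀ (x + Real.pi)‖ ^ 2 * ‖F x‖ ^ 2 / x‖ₑ) = ENNReal.ofReal (b (-n + k)) := by
      intro k
      rw [← hbset k, ofReal_integral_eq_lintegral_ofReal (hIk k)
        ((ae_restrict_mem (hsm k)).mono fun x hx => hnn k x hx)]
      apply lintegral_congr_ae
      filter_upwards [ae_restrict_mem (hsm k)] with x hx
      rw [← Real.enorm_eq_ofReal (hnn k x hx)]
    rw [HasFiniteIntegral, lintegral_iUnion hsm hdisj]
    simp_rw [hlint]
    rw [← ENNReal.ofReal_tsum_of_nonneg (fun k => hbnn _) hsum.summable]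
    exact ENNReal.ofReal_lt_top
  calc a (-n) = ∑' k : ℕ, b (-n + k) := hsum.tsum_eq.symm
    _ = ∑' k : ℕ, ∫ ξ in s k, ‖m₀ (ξ + Real.pi)‖ ^ 2 * ‖F ξ‖ ^ 2 / ξ := by
        exact tsum_congr fun k => (hbset k).symm
    _ = ∫ ξ in ⋃ k, s k, ‖m₀ (ξ + Real.pi)‖ ^ 2 * ‖F ξ‖ ^ 2 / ξ :=
        (integral_iUnion hsm hdisj hIntOn).symm
    _ = ∫ ξ in Set.Ioi ((2:ℝ) ^ (-n)), ‖m₀ (ξ + Real.pi)‖ ^ 2 * ‖F ξ‖ ^ 2 / ξ := by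
        rw [hunion]
end

section
/- Let m₀ : ℝ → ℂ be measurable with |m₀(ξ)|² + |m₀(ξ+π)|² = 1 for all ξ ∈ ℝ. Let F : ℝ → ℂ be bounded and measurable with F(2ξ) = m₀(ξ)·F(ξ) for all ξ ∈ ℝ, continuous at 0 with F(0) = 1, and such that ∫_{2^J ≤ |ξ| ≤ 2^{J+1}} |F(ξ)|²/|ξ| dξ → 0 as J → +∞. Define Φ̂ : ℝ → ℂ by Φ̂(2ξ) := e^{−iξ} · conj(m₀(ξ+π)) · F(ξ). Then ∫_ℝ |Φ̂(ξ)|²/|ξ| dξ = 2 ln 2. -/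
open MeasureTheory Filter Set Topology

namespace MotherWaveletAux

def Ann (a b : ℝ) : Set ℝ := {ξ : ℝ | a ≤ |ξ| ∧ |ξ| < b}

lemma measurableSet_Ann (a b : ℝ) : MeasurableSet (Ann a b) :=
  (measurableSet_le measurable_const continuous_abs.measurable).inter
    (measurableSet_lt continuous_abs.measurable measurable_const)

lemma Ann_subset_Ioo (a b : ℝ) : Ann a b ⊆ Set.Ioo (-b) b := by
  intro x hx
  have := hx.2
  constructor <;> [exact neg_lt_of_abs_lt this; exact lt_of_abs_lt this]

lemma volume_Ann_lt_top (a b : ℝ) : volume (Ann a b) < ⊤ :=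
  lt_of_le_of_lt (measure_mono (Ann_subset_Ioo a b)) measure_Ioo_lt_top

lemma integrableOn_of_bounded' {s : Set ℝ} (hs : MeasurableSet s) (hvol : volume s < ⊤)
    {f : ℝ → ℝ} (hf : Measurable f) (C : ℝ) (h : ∀ x ∈ s, |f x| ≤ C) :
    IntegrableOn f s := by
  refine Measure.integrableOn_of_bounded (M := C) hvol.ne hf.aestronglyMeasurable ?_
  refine (ae_restrict_iff' hs).2 (ae_of_all _ fun x hx => ?_)
  simpa [Real.norm_eq_abs] using h x hx

lemma Ann_disjoint (a b c : ℝ) : Disjoint (Ann a b) (Ann b c) := by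
  rw [Set.disjoint_left]
  rintro x ⟨_, h1⟩ ⟨h2, _⟩
  exact absurd h2 (not_le.2 h1)

lemma Ann_union {a b c : ℝ} (hab : a ≤ b) (hbc : b ≤ c) : Ann a b ∪ Ann b c = Ann a c := by
  ext x
  simp only [Ann, Set.mem_union, Set.mem_setOf_eq]
  constructor
  · rintro (⟨h1, h2⟩ | ⟨h1, h2⟩)
    · exact ⟨h1, lt_of_lt_of_le h2 hbc⟩
    · exact ⟨le_trans hab h1, h2⟩
  · rintro ⟨h1, h2⟩
    rcases lt_or_ge (|x|) b with h | h
    · exact Or.inl ⟨h1, h⟩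
    · exact Or.inr ⟨h, h2⟩

lemma integral_Ann_one_div {a : ℝ} (ha : 0 < a) :
    ∫ ξ in Ann a (2 * a), 1 / |ξ| = 2 * Real.log 2 := by
  have hsplit : Ann a (2 * a) = Set.Ioc (-(2 * a)) (-a) ∪ Set.Ico a (2 * a) := by
    ext x
    simp only [Ann, Set.mem_setOf_eq, Set.mem_union, Set.mem_Ioc, Set.mem_Ico]
    rcases le_or_gt 0 x with hx | hx
    · rw [abs_of_nonneg hx]
      constructor
      · rintro ⟨h1, h2⟩; exact Or.inr ⟨h1, h2⟩
      · rintro (⟨h1, h2⟩ | ⟨h1, h2⟩)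
        · nlinarith
        · exact ⟨h1, h2⟩
    · rw [abs_of_neg hx]
      constructor
      · rintro ⟨h1, h2⟩; exact Or.inl ⟨by linarith, by linarith⟩
      · rintro (⟨h1, h2⟩ | ⟨h1, h2⟩)
        · exact ⟨by linarith, by linarith⟩
        · nlinarith
  have hmeasIoc : MeasurableSet (Set.Ioc (-(2 * a)) (-a)) := measurableSet_Ioc
  have hmeasIco : MeasurableSet (Set.Ico a (2 * a)) := measurableSet_Ico
  have hfmeas : Measurable (fun ξ : ℝ => 1 / |ξ|) :=
    (measurable_const.div continuous_abs.measurable)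
  have hbound : ∀ x : ℝ, a ≤ |x| → abs (1 / |x|) ≤ 1 / a := by
    intro x hx
    rw [abs_of_nonneg (by positivity)]
    exact one_div_le_one_div_of_le ha hx
  have hint1 : IntegrableOn (fun ξ : ℝ => 1 / |ξ|) (Set.Ioc (-(2 * a)) (-a)) := by
    refine integrableOn_of_bounded' hmeasIoc measure_Ioc_lt_top hfmeas (1 / a) ?_
    intro x hx
    refine hbound x ?_
    rw [abs_of_neg (by nlinarith [hx.2, hx.1] : x < 0)]
    linarith [hx.2]
  have hint2 : IntegrableOn (fun ξ : ℝ => 1 / |ξ|) (Set.Ico a (2 * a)) := by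
    refine integrableOn_of_bounded' hmeasIco measure_Ico_lt_top hfmeas (1 / a) ?_
    intro x hx
    exact hbound x (by rw [abs_of_nonneg (le_trans ha.le hx.1)]; exact hx.1)
  have hdisj : Disjoint (Set.Ioc (-(2 * a)) (-a)) (Set.Ico a (2 * a)) := by
    rw [Set.disjoint_left]
    rintro x ⟨_, h1⟩ ⟨h2, _⟩
    linarith
  rw [hsplit, setIntegral_union hdisj hmeasIco hint1 hint2]
  have hneg : ∫ ξ in Set.Ioc (-(2 * a)) (-a), 1 / |ξ| = Real.log 2 := by
    have hcongr : ∫ ξ in Set.Ioc (-(2 * a)) (-a), 1 / |ξ|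
        = ∫ ξ in Set.Ioc (-(2 * a)) (-a), -(1 / ξ) := by
      refine setIntegral_congr_fun hmeasIoc fun x hx => ?_
      rw [abs_of_neg (by nlinarith [hx.2, hx.1] : x < 0), div_neg]
    rw [hcongr, ← intervalIntegral.integral_of_le (by linarith : -(2 * a) ≤ -a),
      intervalIntegral.integral_neg, integral_one_div (by
        intro h
        rcases Set.mem_uIcc.1 h with ⟨h1, h2⟩ | ⟨h1, h2⟩ <;> linarith)]
    rw [← Real.log_inv]
    congr 1
    field_simp
  have hpos : ∫ ξ in Set.Ico a (2 * a), 1 / |ξ| = Real.log 2 := by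
    have hcongr : ∫ ξ in Set.Ico a (2 * a), 1 / |ξ| = ∫ ξ in Set.Ico a (2 * a), 1 / ξ := by
      refine setIntegral_congr_fun hmeasIco fun x hx => ?_
      rw [abs_of_pos (lt_of_lt_of_le ha hx.1)]
    rw [hcongr, MeasureTheory.integral_Ico_eq_integral_Ioo,
      ← MeasureTheory.integral_Ioc_eq_integral_Ioo,
      ← intervalIntegral.integral_of_le (by linarith : a ≤ 2 * a),
      integral_one_div (by
        intro h
        rcases Set.mem_uIcc.1 h with ⟨h1, h2⟩ | ⟨h1, h2⟩ <;> linarith)]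
    congr 1
    field_simp
  rw [hneg, hpos]
  ring

lemma setIntegral_Ann_comp_half (g : ℝ → ℝ) (a b : ℝ) :
    ∫ ξ in Ann a b, g (ξ / 2) = 2 * ∫ η in Ann (a / 2) (b / 2), g η := by
  rw [← MeasureTheory.integral_indicator (measurableSet_Ann a b),
    ← MeasureTheory.integral_indicator (measurableSet_Ann (a / 2) (b / 2))]
  have key : ∀ ξ : ℝ, (Ann a b).indicator (fun ξ => g (ξ / 2)) ξ
      = (Ann (a / 2) (b / 2)).indicator g (ξ / 2) := by
    intro ξ
    have hmem : ξ ∈ Ann a b ↔ ξ / 2 ∈ Ann (a / 2) (b / 2) := by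
      simp only [Ann, Set.mem_setOf_eq, abs_div, abs_two]
      constructor
      · rintro ⟨h1, h2⟩; exact ⟨by linarith, by linarith⟩
      · rintro ⟨h1, h2⟩; exact ⟨by linarith, by linarith⟩
    by_cases h : ξ ∈ Ann a b
    · rw [Set.indicator_of_mem h, Set.indicator_of_mem (hmem.1 h)]
    · rw [Set.indicator_of_notMem h, Set.indicator_of_notMem (fun hc => h (hmem.2 hc))]
  simp_rw [key]
  rw [MeasureTheory.Measure.integral_comp_div (fun x => (Ann (a / 2) (b / 2)).indicator g x) 2]
  simp [smul_eq_mul]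

end MotherWaveletAux

open MotherWaveletAux

/-- For a mother wavelet `Φ` constructed from a filter `m₀` with
`|m₀(ξ)|² + |m₀(ξ+π)|² = 1` and a scaling-function Fourier transform `F` (bounded, measurable,
refinable `F(2ξ) = m₀(ξ)F(ξ)`, continuous at `0` with `F(0) = 1`, with vanishing dyadic tails),
the mother wavelet `Φ̂(2ξ) = e^{-iξ} conj(m₀(ξ+π)) F(ξ)` satisfies
`∫_ℝ |Φ̂(ξ)|²/|ξ| dξ = 2 ln 2`. -/
theorem mother_wavelet_integral (m₀ F Phat : ℝ → ℂ)
    (hm₀ : Measurable m₀)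
    (hunit : ∀ ξ : ℝ, ‖m₀ ξ‖ ^ 2 + ‖m₀ (ξ + Real.pi)‖ ^ 2 = 1)
    (hFmeas : Measurable F) (B : ℝ) (hFbdd : ∀ ξ : ℝ, ‖F ξ‖ ≤ B)
    (href : ∀ ξ : ℝ, F (2 * ξ) = m₀ ξ * F ξ)
    (hcont : ContinuousAt F 0) (hF0 : F 0 = 1)
    (hdecay : Tendsto
      (fun J : ℤ => ∫ ξ in {ξ : ℝ | (2:ℝ) ^ J ≤ |ξ| ∧ |ξ| ≤ (2:ℝ) ^ (J + 1)}, ‖F ξ‖ ^ 2 / |ξ|)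
      atTop (nhds 0))
    (hPhat : ∀ ξ : ℝ,
      Phat (2 * ξ) = Complex.exp (-(ξ : ℂ) * Complex.I) * (starRingEnd ℂ) (m₀ (ξ + Real.pi)) * F ξ) :
    ∫ ξ : ℝ, ‖Phat ξ‖ ^ 2 / |ξ| = 2 * Real.log 2 := by
  classical
  -- ## Basic facts and abbreviations
  set q : ℝ → ℝ := fun ξ => ‖F ξ‖ ^ 2 / |ξ| with hq
  have hB1 : (1 : ℝ) ≤ B := by
    have := hFbdd 0
    rwa [hF0, norm_one] at this
  have hqmeas : Measurable q := (hFmeas.norm.pow_const 2).div continuous_abs.measurable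
  have hq_nonneg : ∀ ξ, 0 ≤ q ξ := fun ξ => div_nonneg (sq_nonneg _) (abs_nonneg ξ)
  have habs2 : ∀ ξ : ℝ, |ξ / 2| = |ξ| / 2 := fun ξ => by rw [abs_div, abs_two]
  have hFsq : ∀ ξ : ℝ, ‖F ξ‖ ^ 2 = ‖m₀ (ξ / 2)‖ ^ 2 * ‖F (ξ / 2)‖ ^ 2 := by
    intro ξ
    have h2 : 2 * (ξ / 2) = ξ := by ring
    calc ‖F ξ‖ ^ 2 = ‖F (2 * (ξ / 2))‖ ^ 2 := by rw [h2]
    _ = ‖m₀ (ξ / 2) * F (ξ / 2)‖ ^ 2 := by rw [href]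
    _ = ‖m₀ (ξ / 2)‖ ^ 2 * ‖F (ξ / 2)‖ ^ 2 := by rw [norm_mul, mul_pow]
  have hp_le_one : ∀ ξ : ℝ, ‖m₀ ξ‖ ^ 2 ≤ 1 := by
    intro ξ
    have := hunit ξ
    nlinarith [sq_nonneg ‖m₀ (ξ + Real.pi)‖]
  have hPhnorm : ∀ ξ : ℝ, ‖Phat ξ‖ ^ 2 = (1 - ‖m₀ (ξ / 2)‖ ^ 2) * ‖F (ξ / 2)‖ ^ 2 := by
    intro ξ
    have h2 : 2 * (ξ / 2) = ξ := by ring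
    have hP := hPhat (ξ / 2)
    rw [h2] at hP
    have hexp : ‖Complex.exp (-(↑(ξ / 2) : ℂ) * Complex.I)‖ = 1 := by
      rw [Complex.norm_exp]
      simp
    have hconj : ‖(starRingEnd ℂ) (m₀ (ξ / 2 + Real.pi))‖ = ‖m₀ (ξ / 2 + Real.pi)‖ :=
      RCLike.norm_conj _
    rw [hP, norm_mul, norm_mul, hexp, hconj, one_mul, mul_pow]
    have := hunit (ξ / 2)
    nlinarith []
  -- pointwise identity for the integrand
  have hq2 : ∀ ξ : ℝ, q (ξ / 2) / 2 = ‖F (ξ / 2)‖ ^ 2 / |ξ| := by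
    intro ξ
    rw [hq]
    simp only
    rw [habs2, div_div]
    congr 1
    ring
  have hHid : ∀ ξ : ℝ, ‖Phat ξ‖ ^ 2 / |ξ| = q (ξ / 2) / 2 - q ξ := by
    intro ξ
    rw [hPhnorm, hq2, hq]
    simp only
    rw [hFsq ξ, ← sub_div]
    congr 1
    ring
  have hH_nonneg : ∀ ξ : ℝ, 0 ≤ q (ξ / 2) / 2 - q ξ := by
    intro ξ
    rw [sub_nonneg, hq2, hq]
    simp only
    rw [hFsq ξ]
    rcases (abs_nonneg ξ).eq_or_lt with h | h
    · rw [← h, div_zero, div_zero]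
    · rw [div_le_div_iff_of_pos_right h]
      nlinarith [hp_le_one (ξ / 2), sq_nonneg ‖F (ξ / 2)‖]
  have hHmeas : Measurable (fun ξ : ℝ => q (ξ / 2) / 2 - q ξ) :=
    ((hqmeas.comp (measurable_id.div_const 2)).div_const 2).sub hqmeas
  -- bounds: q is bounded on sets away from 0
  have hq_bdd : ∀ (a : ℝ), 0 < a → ∀ ξ : ℝ, a ≤ |ξ| → |q ξ| ≤ B ^ 2 / a := by
    intro a ha ξ hξ
    rw [abs_of_nonneg (hq_nonneg ξ), hq]
    simp only
    refine div_le_div₀ (by positivity) ?_ ha hξ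
    nlinarith [hFbdd ξ, norm_nonneg (F ξ)]
  have hq_intOn : ∀ a b : ℝ, 0 < a → IntegrableOn q (Ann a b) := by
    intro a b ha
    exact integrableOn_of_bounded' (measurableSet_Ann a b) (volume_Ann_lt_top a b) hqmeas
      (B ^ 2 / a) (fun x hx => hq_bdd a ha x hx.1)
  have hq2_intOn : ∀ a b : ℝ, 0 < a → IntegrableOn (fun ξ => q (ξ / 2) / 2) (Ann a b) := by
    intro a b ha
    refine integrableOn_of_bounded' (measurableSet_Ann a b) (volume_Ann_lt_top a b)
      ((hqmeas.comp (measurable_id.div_const 2)).div_const 2) (B ^ 2 / a) ?_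
    intro x hx
    have ha' : a ≠ 0 := ne_of_gt ha
    have h1 : a / 2 ≤ |x / 2| := by rw [habs2]; linarith [hx.1]
    have h2 := hq_bdd (a / 2) (by linarith) (x / 2) h1
    have h3 : |q (x / 2) / 2| = |q (x / 2)| / 2 := by rw [abs_div, abs_two]
    have h4 : B ^ 2 / (a / 2) = 2 * (B ^ 2 / a) := by field_simp
    rw [h4] at h2
    rw [h3]
    linarith
  -- ## dyadic arithmetic
  have h2pos : ∀ m : ℤ, (0:ℝ) < 2 ^ m := fun m => zpow_pos (by norm_num) m
  have hhalf : ∀ m : ℤ, (2:ℝ) ^ m / 2 = 2 ^ (m - 1) := by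
    intro m
    rw [zpow_sub₀ (by norm_num : (2:ℝ) ≠ 0), zpow_one]
  have hzle : ∀ {m n : ℤ}, m ≤ n → (2:ℝ) ^ m ≤ 2 ^ n :=
    fun h => zpow_le_zpow_right₀ one_le_two h
  -- ## the key finite-scale formula
  have hformula : ∀ N : ℕ, 1 ≤ N →
      (∫ ξ in Ann ((2:ℝ) ^ (-(N:ℤ))) ((2:ℝ) ^ (N:ℤ)), (q (ξ / 2) / 2 - q ξ))
        = (∫ ξ in Ann ((2:ℝ) ^ (-(N:ℤ) - 1)) ((2:ℝ) ^ (-(N:ℤ))), q ξ)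
          - ∫ ξ in Ann ((2:ℝ) ^ ((N:ℤ) - 1)) ((2:ℝ) ^ (N:ℤ)), q ξ := by
    intro N hN
    have hN' : (1:ℤ) ≤ (N:ℤ) := by exact_mod_cast hN
    have ha := h2pos (-(N:ℤ))
    have hsub : ∫ ξ in Ann ((2:ℝ) ^ (-(N:ℤ))) ((2:ℝ) ^ (N:ℤ)), (q (ξ / 2) / 2 - q ξ)
        = (∫ ξ in Ann ((2:ℝ) ^ (-(N:ℤ))) ((2:ℝ) ^ (N:ℤ)), q (ξ / 2) / 2)
          - ∫ ξ in Ann ((2:ℝ) ^ (-(N:ℤ))) ((2:ℝ) ^ (N:ℤ)), q ξ :=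
      integral_sub (hq2_intOn _ _ ha) (hq_intOn _ _ ha)
    have hcv : (∫ ξ in Ann ((2:ℝ) ^ (-(N:ℤ))) ((2:ℝ) ^ (N:ℤ)), q (ξ / 2) / 2)
        = ∫ ξ in Ann ((2:ℝ) ^ (-(N:ℤ) - 1)) ((2:ℝ) ^ ((N:ℤ) - 1)), q ξ := by
      rw [MeasureTheory.integral_div, setIntegral_Ann_comp_half q _ _, hhalf, hhalf]
      ring
    have hsplitT : (∫ ξ in Ann ((2:ℝ) ^ (-(N:ℤ) - 1)) ((2:ℝ) ^ ((N:ℤ) - 1)), q ξ)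
        = (∫ ξ in Ann ((2:ℝ) ^ (-(N:ℤ) - 1)) ((2:ℝ) ^ (-(N:ℤ))), q ξ)
          + ∫ ξ in Ann ((2:ℝ) ^ (-(N:ℤ))) ((2:ℝ) ^ ((N:ℤ) - 1)), q ξ := by
      rw [← Ann_union (b := (2:ℝ) ^ (-(N:ℤ))) (hzle (by omega)) (hzle (by omega)),
        setIntegral_union (Ann_disjoint _ _ _) (measurableSet_Ann _ _)
          (hq_intOn _ _ (h2pos _)) (hq_intOn _ _ (h2pos _))]
    have hsplitS : (∫ ξ in Ann ((2:ℝ) ^ (-(N:ℤ))) ((2:ℝ) ^ ((N:ℤ))), q ξ)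
        = (∫ ξ in Ann ((2:ℝ) ^ (-(N:ℤ))) ((2:ℝ) ^ ((N:ℤ) - 1)), q ξ)
          + ∫ ξ in Ann ((2:ℝ) ^ ((N:ℤ) - 1)) ((2:ℝ) ^ ((N:ℤ))), q ξ := by
      rw [← Ann_union (b := (2:ℝ) ^ ((N:ℤ) - 1)) (hzle (by omega)) (hzle (by omega)),
        setIntegral_union (Ann_disjoint _ _ _) (measurableSet_Ann _ _)
          (hq_intOn _ _ (h2pos _)) (hq_intOn _ _ (h2pos _))]
    rw [hsub, hcv, hsplitT, hsplitS]
    ring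
  -- ## the outer tail tends to zero
  have hR : Tendsto (fun N : ℕ => ∫ ξ in Ann ((2:ℝ) ^ ((N:ℤ) - 1)) ((2:ℝ) ^ (N:ℤ)), q ξ)
      atTop (𝓝 0) := by
    have hg : Tendsto (fun N : ℕ => (N:ℤ) - 1) atTop atTop := by
      have := tendsto_atTop_add_const_right atTop (-1 : ℤ)
        (tendsto_natCast_atTop_atTop : Tendsto (fun n : ℕ => (n:ℤ)) atTop atTop)
      simpa [sub_eq_add_neg] using this
    have hcomp := hdecay.comp hg
    refine squeeze_zero
      (fun N => setIntegral_nonneg (measurableSet_Ann _ _) fun ξ _ => hq_nonneg ξ)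
      (fun N => ?_) (by simpa [Function.comp] using hcomp)
    have hsub2 : Ann ((2:ℝ) ^ ((N:ℤ) - 1)) ((2:ℝ) ^ (N:ℤ))
        ⊆ {ξ : ℝ | (2:ℝ) ^ ((N:ℤ) - 1) ≤ |ξ| ∧ |ξ| ≤ (2:ℝ) ^ (((N:ℤ) - 1) + 1)} := by
      intro x hx
      have hNN : ((N:ℤ) - 1) + 1 = (N:ℤ) := by ring
      exact ⟨hx.1, by rw [hNN]; exact hx.2.le⟩
    have hcl_meas : MeasurableSet
        {ξ : ℝ | (2:ℝ) ^ ((N:ℤ) - 1) ≤ |ξ| ∧ |ξ| ≤ (2:ℝ) ^ (((N:ℤ) - 1) + 1)} :=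
      (measurableSet_le measurable_const continuous_abs.measurable).inter
        (measurableSet_le continuous_abs.measurable measurable_const)
    have hcl_vol : volume {ξ : ℝ | (2:ℝ) ^ ((N:ℤ) - 1) ≤ |ξ| ∧ |ξ| ≤ (2:ℝ) ^ (((N:ℤ) - 1) + 1)}
        < ⊤ := by
      refine lt_of_le_of_lt (measure_mono (fun x hx => ?_)) (measure_Icc_lt_top
        (a := -((2:ℝ) ^ (((N:ℤ) - 1) + 1))) (b := (2:ℝ) ^ (((N:ℤ) - 1) + 1)))
      exact abs_le.1 hx.2
    have hcl_int : IntegrableOn q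
        {ξ : ℝ | (2:ℝ) ^ ((N:ℤ) - 1) ≤ |ξ| ∧ |ξ| ≤ (2:ℝ) ^ (((N:ℤ) - 1) + 1)} :=
      integrableOn_of_bounded' hcl_meas hcl_vol hqmeas (B ^ 2 / 2 ^ ((N:ℤ) - 1))
        (fun x hx => hq_bdd _ (h2pos _) x hx.1)
    exact setIntegral_mono_set hcl_int (ae_of_all _ hq_nonneg)
      (HasSubset.Subset.eventuallyLE hsub2)
  -- ## the inner integrals tend to 2 log 2
  have hlog2pos : (0:ℝ) < Real.log 2 := Real.log_pos one_lt_two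
  have h1div_meas : Measurable (fun ξ : ℝ => 1 / |ξ|) :=
    measurable_const.div continuous_abs.measurable
  have h1div_int : ∀ N : ℕ,
      IntegrableOn (fun ξ : ℝ => 1 / |ξ|) (Ann ((2:ℝ) ^ (-(N:ℤ) - 1)) ((2:ℝ) ^ (-(N:ℤ)))) := by
    intro N
    refine integrableOn_of_bounded' (measurableSet_Ann _ _) (volume_Ann_lt_top _ _)
      h1div_meas (1 / 2 ^ (-(N:ℤ) - 1)) (fun x hx => ?_)
    rw [abs_of_nonneg (by positivity)]
    exact one_div_le_one_div_of_le (h2pos _) hx.1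
  have herr_meas : Measurable (fun ξ : ℝ => (‖F ξ‖ ^ 2 - 1) / |ξ|) :=
    ((hFmeas.norm.pow_const 2).sub measurable_const).div continuous_abs.measurable
  have herr_int : ∀ N : ℕ, IntegrableOn (fun ξ : ℝ => (‖F ξ‖ ^ 2 - 1) / |ξ|)
      (Ann ((2:ℝ) ^ (-(N:ℤ) - 1)) ((2:ℝ) ^ (-(N:ℤ)))) := by
    intro N
    refine integrableOn_of_bounded' (measurableSet_Ann _ _) (volume_Ann_lt_top _ _)
      herr_meas ((B ^ 2 + 1) / 2 ^ (-(N:ℤ) - 1)) (fun x hx => ?_)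
    rw [abs_div, abs_abs]
    refine div_le_div₀ (by positivity) ?_ (h2pos _) hx.1
    refine abs_le.2 ⟨?_, ?_⟩ <;> nlinarith [hFbdd x, norm_nonneg (F x), sq_nonneg ‖F x‖]
  have hb2 : ∀ N : ℕ, (2:ℝ) ^ (-(N:ℤ)) = 2 * 2 ^ (-(N:ℤ) - 1) := by
    intro N
    rw [← hhalf (-(N:ℤ))]
    ring
  have hEdef : ∀ N : ℕ, (∫ ξ in Ann ((2:ℝ) ^ (-(N:ℤ) - 1)) ((2:ℝ) ^ (-(N:ℤ))), q ξ)
      = 2 * Real.log 2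
        + ∫ ξ in Ann ((2:ℝ) ^ (-(N:ℤ) - 1)) ((2:ℝ) ^ (-(N:ℤ))), (‖F ξ‖ ^ 2 - 1) / |ξ| := by
    intro N
    have hptw : ∀ x ∈ Ann ((2:ℝ) ^ (-(N:ℤ) - 1)) ((2:ℝ) ^ (-(N:ℤ))),
        q x = 1 / |x| + (‖F x‖ ^ 2 - 1) / |x| := by
      intro x _
      rw [hq]
      simp only
      rw [← add_div]
      congr 1
      ring
    rw [setIntegral_congr_fun (measurableSet_Ann _ _) hptw,
      integral_add (h1div_int N) (herr_int N)]
    congr 1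
    rw [hb2 N]
    exact integral_Ann_one_div (h2pos _)
  have hE0 : Tendsto (fun N : ℕ =>
      ∫ ξ in Ann ((2:ℝ) ^ (-(N:ℤ) - 1)) ((2:ℝ) ^ (-(N:ℤ))), (‖F ξ‖ ^ 2 - 1) / |ξ|)
      atTop (𝓝 0) := by
    rw [Metric.tendsto_atTop]
    intro ε hε
    set ε' := ε / (2 * Real.log 2 + 1) with hε'def
    have hε'pos : 0 < ε' := div_pos hε (by linarith)
    have hcont2 : ContinuousAt (fun ξ : ℝ => ‖F ξ‖ ^ 2) 0 := hcont.norm.pow 2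
    obtain ⟨δ, hδpos, hδ⟩ := Metric.continuousAt_iff.1 hcont2 ε' hε'pos
    obtain ⟨n₀, hn₀⟩ := exists_pow_lt_of_lt_one hδpos (by norm_num : (1:ℝ)/2 < 1)
    refine ⟨n₀, fun N hN => ?_⟩
    rw [Real.dist_eq, sub_zero]
    have hsmall : ∀ x ∈ Ann ((2:ℝ) ^ (-(N:ℤ) - 1)) ((2:ℝ) ^ (-(N:ℤ))),
        |‖F x‖ ^ 2 - 1| ≤ ε' := by
      intro x hx
      have hpow : (2:ℝ) ^ (-(N:ℤ)) = (1/2:ℝ) ^ N := by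
        rw [zpow_neg, zpow_natCast, ← inv_pow, one_div]
      have h3 : ((1:ℝ)/2) ^ N ≤ (1/2:ℝ) ^ n₀ :=
        pow_le_pow_of_le_one (by norm_num) (by norm_num) hN
      have h1 : |x| < δ := by
        calc |x| < (2:ℝ) ^ (-(N:ℤ)) := hx.2
        _ = (1/2:ℝ) ^ N := hpow
        _ ≤ (1/2:ℝ) ^ n₀ := h3
        _ < δ := hn₀
      have h4 := hδ (x := x) (by rw [Real.dist_eq, sub_zero]; exact h1)
      rw [Real.dist_eq, hF0] at h4
      simp only [norm_one, one_pow] at h4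
      exact h4.le
    have hptw : ∀ x ∈ Ann ((2:ℝ) ^ (-(N:ℤ) - 1)) ((2:ℝ) ^ (-(N:ℤ))),
        abs ((‖F x‖ ^ 2 - 1) / |x|) ≤ ε' * (1 / |x|) := by
      intro x hx
      have hxpos : 0 < |x| := lt_of_lt_of_le (h2pos _) hx.1
      rw [abs_div, abs_abs, mul_one_div]
      exact (div_le_div_iff_of_pos_right hxpos).2 (hsmall x hx)
    have hconst_int : IntegrableOn (fun ξ : ℝ => ε' * (1 / |ξ|))
        (Ann ((2:ℝ) ^ (-(N:ℤ) - 1)) ((2:ℝ) ^ (-(N:ℤ)))) := (h1div_int N).const_mul ε'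
    have habs : abs (∫ ξ in Ann ((2:ℝ) ^ (-(N:ℤ) - 1)) ((2:ℝ) ^ (-(N:ℤ))), (‖F ξ‖ ^ 2 - 1) / |ξ|)
        ≤ ∫ ξ in Ann ((2:ℝ) ^ (-(N:ℤ) - 1)) ((2:ℝ) ^ (-(N:ℤ))), abs ((‖F ξ‖ ^ 2 - 1) / |ξ|) := by
      exact
        norm_integral_le_integral_norm (μ := volume.restrict
          (Ann ((2:ℝ) ^ (-(N:ℤ) - 1)) ((2:ℝ) ^ (-(N:ℤ)))))
          (fun ξ : ℝ => (‖F ξ‖ ^ 2 - 1) / |ξ|)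
    have hmono2 : (∫ ξ in Ann ((2:ℝ) ^ (-(N:ℤ) - 1)) ((2:ℝ) ^ (-(N:ℤ))), abs ((‖F ξ‖ ^ 2 - 1) / |ξ|))
        ≤ ∫ ξ in Ann ((2:ℝ) ^ (-(N:ℤ) - 1)) ((2:ℝ) ^ (-(N:ℤ))), ε' * (1 / |ξ|) :=
      setIntegral_mono_on (herr_int N).abs hconst_int (measurableSet_Ann _ _) hptw
    have hconst_val : (∫ ξ in Ann ((2:ℝ) ^ (-(N:ℤ) - 1)) ((2:ℝ) ^ (-(N:ℤ))), ε' * (1 / |ξ|))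
        = ε' * (2 * Real.log 2) := by
      rw [MeasureTheory.integral_const_mul]
      congr 1
      rw [hb2 N]
      exact integral_Ann_one_div (h2pos _)
    calc abs (∫ ξ in Ann ((2:ℝ) ^ (-(N:ℤ) - 1)) ((2:ℝ) ^ (-(N:ℤ))), (‖F ξ‖ ^ 2 - 1) / |ξ|)
        ≤ ε' * (2 * Real.log 2) := by rw [← hconst_val]; exact le_trans habs hmono2
    _ < ε' * (2 * Real.log 2 + 1) := by nlinarith
    _ = ε := by rw [hε'def]; field_simp
  have hL : Tendsto (fun N : ℕ => ∫ ξ in Ann ((2:ℝ) ^ (-(N:ℤ) - 1)) ((2:ℝ) ^ (-(N:ℤ))), q ξ)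
      atTop (𝓝 (2 * Real.log 2)) := by
    simp_rw [hEdef]
    simpa using tendsto_const_nhds.add hE0
  have hcN : Tendsto (fun N : ℕ =>
      ∫ ξ in Ann ((2:ℝ) ^ (-(N:ℤ))) ((2:ℝ) ^ ((N:ℤ))), (q (ξ / 2) / 2 - q ξ))
      atTop (𝓝 (2 * Real.log 2)) := by
    have h := hL.sub hR
    rw [sub_zero] at h
    exact Filter.Tendsto.congr'
      (by filter_upwards [eventually_ge_atTop 1] with N hN; exact (hformula N hN).symm) h
  -- ## assembling everything via monotone convergence
  have hSmono : Monotone (fun N : ℕ => Ann ((2:ℝ) ^ (-(N:ℤ))) ((2:ℝ) ^ ((N:ℤ)))) := by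
    intro N M h x hx
    have hNM : (N:ℤ) ≤ (M:ℤ) := by exact_mod_cast h
    exact ⟨le_trans (hzle (by omega)) hx.1, lt_of_lt_of_le hx.2 (hzle hNM)⟩
  have hUnion : (⋃ N : ℕ, Ann ((2:ℝ) ^ (-(N:ℤ))) ((2:ℝ) ^ ((N:ℤ)))) = {ξ : ℝ | ξ ≠ 0} := by
    ext x
    simp only [Set.mem_iUnion, Ann, Set.mem_setOf_eq]
    constructor
    · rintro ⟨N, h1, -⟩
      intro hx0
      rw [hx0, abs_zero] at h1
      exact absurd h1 (not_le.2 (h2pos _))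
    · intro hx
      have h0 : 0 < |x| := abs_pos.2 hx
      obtain ⟨n1, hn1⟩ := pow_unbounded_of_one_lt |x| one_lt_two
      obtain ⟨n2, hn2⟩ := pow_unbounded_of_one_lt |x|⁻¹ one_lt_two
      refine ⟨max n1 n2, ?_, ?_⟩
      · have hp : (0:ℝ) < 2 ^ (max n1 n2) := pow_pos two_pos _
        have h2 : |x|⁻¹ < 2 ^ (max n1 n2) :=
          lt_of_lt_of_le hn2 (pow_le_pow_right₀ one_le_two (le_max_right _ _))
        have h3 : (2:ℝ) ^ (-((max n1 n2 : ℕ) : ℤ)) = ((2:ℝ) ^ (max n1 n2))⁻¹ := by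
          rw [zpow_neg, zpow_natCast]
        rw [h3, inv_le_comm₀ hp h0]
        exact h2.le
      · calc |x| < 2 ^ n1 := hn1
        _ ≤ 2 ^ (max n1 n2) := pow_le_pow_right₀ one_le_two (le_max_left _ _)
        _ = (2:ℝ) ^ ((max n1 n2 : ℕ) : ℤ) := by rw [zpow_natCast]
  have hIntEq : (fun ξ : ℝ => ‖Phat ξ‖ ^ 2 / |ξ|) = fun ξ => q (ξ / 2) / 2 - q ξ :=
    funext hHid
  rw [show (∫ ξ : ℝ, ‖Phat ξ‖ ^ 2 / |ξ|) = ∫ ξ : ℝ, (q (ξ / 2) / 2 - q ξ) from by rw [hIntEq]]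
  rw [integral_eq_lintegral_of_nonneg_ae (ae_of_all _ hH_nonneg) hHmeas.aestronglyMeasurable]
  have hgmeas : Measurable (fun ξ : ℝ => ENNReal.ofReal (q (ξ / 2) / 2 - q ξ)) :=
    ENNReal.measurable_ofReal.comp hHmeas
  have hae : (Set.univ : Set ℝ) =ᵐ[volume]
      ⋃ N : ℕ, Ann ((2:ℝ) ^ (-(N:ℤ))) ((2:ℝ) ^ ((N:ℤ))) := by
    rw [hUnion]
    have hne : ∀ᵐ x : ℝ, x ≠ 0 := by
      rw [ae_iff]
      have h0 : volume ({0} : Set ℝ) = 0 := Real.volume_singleton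
      convert h0 using 2
      ext x
      simp
    filter_upwards [hne] with x hx
    exact propext (iff_of_true trivial hx)
  have hH_intOn : ∀ N : ℕ, IntegrableOn (fun ξ => q (ξ / 2) / 2 - q ξ)
      (Ann ((2:ℝ) ^ (-(N:ℤ))) ((2:ℝ) ^ ((N:ℤ)))) :=
    fun N => (hq2_intOn _ _ (h2pos _)).sub (hq_intOn _ _ (h2pos _))
  have hlin : (∫⁻ ξ : ℝ, ENNReal.ofReal (q (ξ / 2) / 2 - q ξ))
      = ENNReal.ofReal (2 * Real.log 2) := by
    calc ∫⁻ ξ : ℝ, ENNReal.ofReal (q (ξ / 2) / 2 - q ξ)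
        = ∫⁻ ξ in ⋃ N : ℕ, Ann ((2:ℝ) ^ (-(N:ℤ))) ((2:ℝ) ^ ((N:ℤ))),
            ENNReal.ofReal (q (ξ / 2) / 2 - q ξ) := by
          rw [← setLIntegral_univ]
          exact setLIntegral_congr hae
    _ = ⨆ N : ℕ, ∫⁻ ξ in Ann ((2:ℝ) ^ (-(N:ℤ))) ((2:ℝ) ^ ((N:ℤ))),
            ENNReal.ofReal (q (ξ / 2) / 2 - q ξ) := by
          rw [← lintegral_indicator (MeasurableSet.iUnion fun N => measurableSet_Ann _ _)]
          have hind : ∀ ξ : ℝ, (⋃ N : ℕ, Ann ((2:ℝ) ^ (-(N:ℤ))) ((2:ℝ) ^ ((N:ℤ)))).indicator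
              (fun ξ => ENNReal.ofReal (q (ξ / 2) / 2 - q ξ)) ξ
              = ⨆ N : ℕ, (Ann ((2:ℝ) ^ (-(N:ℤ))) ((2:ℝ) ^ ((N:ℤ)))).indicator
                (fun ξ => ENNReal.ofReal (q (ξ / 2) / 2 - q ξ)) ξ := by
            intro ξ
            by_cases hξ : ξ ∈ ⋃ N : ℕ, Ann ((2:ℝ) ^ (-(N:ℤ))) ((2:ℝ) ^ ((N:ℤ)))
            · obtain ⟨N₀, hN₀⟩ := Set.mem_iUnion.1 hξ
              rw [Set.indicator_of_mem hξ]
              refine le_antisymm (le_iSup_of_le N₀ (by rw [Set.indicator_of_mem hN₀])) ?_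
              refine iSup_le fun N => ?_
              by_cases h : ξ ∈ Ann ((2:ℝ) ^ (-(N:ℤ))) ((2:ℝ) ^ ((N:ℤ)))
              · rw [Set.indicator_of_mem h]
              · rw [Set.indicator_of_notMem h]
                exact zero_le
            · have hall : ∀ N : ℕ, ξ ∉ Ann ((2:ℝ) ^ (-(N:ℤ))) ((2:ℝ) ^ ((N:ℤ))) :=
                fun N h => hξ (Set.mem_iUnion.2 ⟨N, h⟩)
              rw [Set.indicator_of_notMem hξ]
              symm
              simp only [ENNReal.iSup_eq_zero]
              exact fun N => Set.indicator_of_notMem (hall N) _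
          simp_rw [hind]
          rw [lintegral_iSup (fun N => hgmeas.indicator (measurableSet_Ann _ _))
            (fun N M h => Set.indicator_le_indicator_of_subset (hSmono h) (fun ξ => zero_le))]
          exact iSup_congr fun N => lintegral_indicator (measurableSet_Ann _ _) _
    _ = ENNReal.ofReal (2 * Real.log 2) := by
          have hmono3 : Monotone (fun N : ℕ =>
              ∫⁻ ξ in Ann ((2:ℝ) ^ (-(N:ℤ))) ((2:ℝ) ^ ((N:ℤ))),
                ENNReal.ofReal (q (ξ / 2) / 2 - q ξ)) := fun N M h =>
            lintegral_mono' (Measure.restrict_mono (hSmono h) le_rfl) le_rfl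
          have hts := tendsto_atTop_iSup hmono3
          have hts2 : Tendsto (fun N : ℕ =>
              ∫⁻ ξ in Ann ((2:ℝ) ^ (-(N:ℤ))) ((2:ℝ) ^ ((N:ℤ))),
                ENNReal.ofReal (q (ξ / 2) / 2 - q ξ)) atTop
              (𝓝 (ENNReal.ofReal (2 * Real.log 2))) := by
            refine (ENNReal.tendsto_ofReal hcN).congr fun N => ?_
            exact ofReal_integral_eq_lintegral_ofReal (hH_intOn N) (ae_of_all _ hH_nonneg)
          exact tendsto_nhds_unique hts hts2
  rw [hlin, ENNReal.toReal_ofReal (by nlinarith [hlog2pos] : (0:ℝ) ≤ 2 * Real.log 2)]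
end

section
/- Let q > 1/2 and C₁ > 0. There exists a constant C₀ (depending only on q and C₁) such that: for every integer m ≥ 0, every dyadic interval I ⊂ [0,1] of length 2^{−m}, every family of functions (ψ_{j,l})_{j≥m, 0≤l<2^j} on [0,1] satisfying the vaguelet value decay bound with constants C₁ and q, and every θ ∈ I: Σ_{j≥m} Σ_{l : J_{j,l} ⊄ 3I} ψ_{j,l}(θ)² ≤ C₀. -/
open MeasureTheory
open scoped Classical

/-- The dyadic subinterval `J_{j,l} = [l 2^{-j}, (l+1) 2^{-j}]` of `[0,1]`. -/
def dyadicI (j l : ℕ) : Set ℝ := Set.Icc ((l : ℝ) / 2 ^ j) (((l : ℝ) + 1) / 2 ^ j)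

/-- Distance between two points of `[0,1]` on the circle `ℝ/ℤ`. -/
noncomputable def circleDist (x y : ℝ) : ℝ := ⨅ k : ℤ, |x - y + (k : ℝ)|

/-- Distance from a point to a set on the circle `ℝ/ℤ`. -/
noncomputable def circleDistToSet (θ : ℝ) (J : Set ℝ) : ℝ := ⨅ x : J, circleDist θ (x : ℝ)

/-- `3I`: the union of a dyadic interval `I = J_{m,l}` and its two cyclic neighbors of the
same length. -/
def tripleI (m l : ℕ) : Set ℝ :=
  dyadicI m ((l + (2 ^ m - 1)) % 2 ^ m) ∪ dyadicI m l ∪ dyadicI m ((l + 1) % 2 ^ m)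


lemma circleDist_nonneg (x y : ℝ) : 0 ≤ circleDist x y :=
  Real.iInf_nonneg fun _ => abs_nonneg _

lemma circleDistToSet_nonneg (θ : ℝ) (J : Set ℝ) : 0 ≤ circleDistToSet θ J :=
  Real.iInf_nonneg fun _ => circleDist_nonneg _ _

lemma min_le_circleDist (x y : ℝ) : min |x - y| (1 - |x - y|) ≤ circleDist x y := by
  apply le_ciInf
  intro k
  rcases eq_or_ne k 0 with rfl | hk
  · simpa using min_le_left _ _
  · refine le_trans (min_le_right _ _) ?_
    have h1 : (1:ℝ) ≤ |(k:ℝ)| := by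
      have := Int.one_le_abs hk
      exact_mod_cast this
    have h2 : |(k:ℝ)| ≤ |x - y + k| + |x - y| := by
      have : |(k:ℝ)| = |(x - y + k) - (x - y)| := by ring_nf
      rw [this]; exact abs_sub _ _
    linarith

lemma dyadicI_nonempty (j l : ℕ) : (dyadicI j l).Nonempty := by
  refine ⟨(l:ℝ)/2^j, le_refl _, ?_⟩
  apply div_le_div_of_nonneg_right (by linarith) (by positivity)

-- distance lemma on the line

lemma real_gap (N a s : ℕ) (hs : 1 ≤ s) (hsN : s + 1 ≤ N) (θ x : ℝ)
    (hθ : θ ∈ Set.Icc ((a:ℝ)/N) (((a:ℝ)+1)/N))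
    (hx : x ∈ Set.Icc (((a:ℝ)+(s:ℝ))/N) (((a:ℝ)+(s:ℝ)+1)/N)) :
    ((min s (N - s) - 1 : ℕ):ℝ)/N ≤ min |θ - x| (1 - |θ - x|) := by
  have hN : (0:ℝ) < N := by
    have : 0 < N := by omega
    exact_mod_cast this
  obtain ⟨hθ1, hθ2⟩ := hθ
  obtain ⟨hx1, hx2⟩ := hx
  have hs' : (1:ℝ) ≤ (s:ℝ) := by exact_mod_cast hs
  have hsN' : (s:ℝ) + 1 ≤ (N:ℝ) := by exact_mod_cast hsN
  have hθ1' : (a:ℝ) ≤ θ * N := by rwa [div_le_iff₀ hN] at hθ1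
  have hθ2' : θ * N ≤ (a:ℝ) + 1 := by rwa [le_div_iff₀ hN] at hθ2
  have hx1' : (a:ℝ) + s ≤ x * N := by rwa [div_le_iff₀ hN] at hx1
  have hx2' : x * N ≤ (a:ℝ) + s + 1 := by rwa [le_div_iff₀ hN] at hx2
  have hge : ((s:ℝ) - 1)/N ≤ x - θ := by
    rw [div_le_iff₀ hN]; nlinarith
  have hge' : 0 ≤ x - θ := le_trans (div_nonneg (by linarith) hN.le) hge
  have habs : |θ - x| = x - θ := by rw [abs_sub_comm]; exact abs_of_nonneg hge'
  have hm1 : ((min s (N-s) - 1 : ℕ):ℝ) ≤ (s:ℝ) - 1 := by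
    have h1 : min s (N-s) - 1 ≤ s - 1 := by omega
    calc ((min s (N-s) - 1 : ℕ):ℝ) ≤ ((s - 1 : ℕ):ℝ) := by exact_mod_cast h1
    _ = (s:ℝ) - 1 := by push_cast [hs]; ring
  have hm2 : ((min s (N-s) - 1 : ℕ):ℝ) ≤ (N:ℝ) - (s:ℝ) - 1 := by
    have h1 : min s (N-s) - 1 ≤ N - s - 1 := by omega
    calc ((min s (N-s) - 1 : ℕ):ℝ) ≤ ((N - s - 1 : ℕ):ℝ) := by exact_mod_cast h1
    _ = (N:ℝ) - (s:ℝ) - 1 := by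
        have h2 : N - s - 1 + (s + 1) = N := by omega
        have h3 := congrArg (fun t : ℕ => (t:ℝ)) h2
        push_cast at h3
        linarith
  rw [habs]
  apply le_min
  · refine le_trans ?_ hge
    gcongr
  · rw [div_le_iff₀ hN]; nlinarith

lemma dyadic_parent (m d l : ℕ) : dyadicI (m+d) l ⊆ dyadicI m (l / 2^d) := by
  intro x hx
  obtain ⟨h1, h2⟩ := hx
  set k := l / 2^d with hk
  have hb : 0 < 2^d := Nat.pow_pos (by norm_num)
  have hk1 : k * 2^d ≤ l := Nat.div_mul_le_self l (2^d)
  have hk2 : l + 1 ≤ (k+1) * 2^d := by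
    have h : l < (k+1) * 2^d := (Nat.div_lt_iff_lt_mul hb).mp (by omega)
    omega
  have hpow : ((2:ℝ)^(m+d)) = 2^m * 2^d := by rw [pow_add]
  have hpos : (0:ℝ) < 2^(m+d) := by positivity
  have hposm : (0:ℝ) < 2^m := by positivity
  have hposd : (0:ℝ) < 2^d := by positivity
  constructor
  · calc ((k:ℝ))/2^m = ((k:ℝ) * 2^d)/2^(m+d) := by rw [hpow]; field_simp
    _ ≤ (l:ℝ)/2^(m+d) := by
        apply div_le_div_of_nonneg_right ?_ hpos.le |>.trans_eq rfl
        exact_mod_cast hk1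
    _ ≤ x := h1
  · calc x ≤ ((l:ℝ)+1)/2^(m+d) := h2
    _ ≤ (((k:ℝ)+1) * 2^d)/2^(m+d) := by
        apply div_le_div_of_nonneg_right ?_ hpos.le |>.trans_eq rfl
        exact_mod_cast hk2
    _ = ((k:ℝ)+1)/2^m := by rw [hpow]; field_simp

lemma natlem (N l₀ k : ℕ) (hl₀ : l₀ < N) (hkN : k < N) (h0 : k ≠ l₀)
    (h1 : k ≠ (l₀ + (N-1)) % N) (h2 : k ≠ (l₀ + 1) % N) :
    2 ≤ (k + (N - l₀)) % N ∧ (k + (N - l₀)) % N + 2 ≤ N := by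
  have hA : (l₀ + 1) % N = if l₀ + 1 = N then 0 else l₀ + 1 := by
    split
    · next h => rw [h, Nat.mod_self]
    · next h => exact Nat.mod_eq_of_lt (by omega)
  have hB : (l₀ + (N - 1)) % N = if l₀ = 0 then N - 1 else l₀ - 1 := by
    split
    · next h => subst h; rw [Nat.zero_add]; exact Nat.mod_eq_of_lt (by omega)
    · next h =>
        have he : l₀ + (N - 1) = N + (l₀ - 1) := by omega
        rw [he, Nat.add_mod_left, Nat.mod_eq_of_lt (by omega)]
  have hr : (l₀ ≤ k ∧ (k + (N - l₀)) % N = k - l₀) ∨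
      (k < l₀ ∧ (k + (N - l₀)) % N = k + (N - l₀)) := by
    rcases le_or_gt l₀ k with h | h
    · left
      refine ⟨h, ?_⟩
      have he : k + (N - l₀) = (k - l₀) + N := by omega
      rw [he, Nat.add_mod_right, Nat.mod_eq_of_lt (by omega)]
    · right
      exact ⟨h, Nat.mod_eq_of_lt (by omega)⟩
  rw [hB] at h1
  rw [hA] at h2
  split_ifs at h1 h2 <;> rcases hr with ⟨h, he⟩ | ⟨h, he⟩ <;> omega

lemma key (m d l₀ l : ℕ) (hl₀ : l₀ < 2^m) (hl : l < 2^(m+d))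
    (hns : ¬ dyadicI (m+d) l ⊆ tripleI m l₀) (θ : ℝ) (hθ : θ ∈ dyadicI m l₀) :
    2 ≤ min ((l/2^d + (2^m - l₀)) % 2^m) (2^m - (l/2^d + (2^m - l₀)) % 2^m) ∧
      ((min ((l/2^d + (2^m - l₀)) % 2^m) (2^m - (l/2^d + (2^m - l₀)) % 2^m) - 1 : ℕ):ℝ)/((2^m:ℕ):ℝ)
        ≤ circleDistToSet θ (dyadicI (m+d) l) := by
  have hN : 0 < 2^m := Nat.pow_pos (by norm_num)
  have hb : 0 < 2^d := Nat.pow_pos (by norm_num)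
  set N := 2^m with hNdef
  set k := l / 2^d with hkdef
  set r := (k + (N - l₀)) % N with hrdef
  have hkN : k < N := by
    rw [hkdef]
    apply (Nat.div_lt_iff_lt_mul hb).mpr
    calc l < 2^(m+d) := hl
    _ = N * 2^d := by rw [hNdef, pow_add]
  have hsub : dyadicI (m+d) l ⊆ dyadicI m k := dyadic_parent m d l
  have hmem : ∀ k', k' = l₀ ∨ k' = (l₀ + (N - 1)) % N ∨ k' = (l₀ + 1) % N →
      dyadicI m k' ⊆ tripleI m l₀ := by
    intro k' hk' x hx
    simp only [tripleI, Set.mem_union, ← hNdef]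
    rcases hk' with h | h | h
    · exact Or.inl (Or.inr (h ▸ hx))
    · exact Or.inl (Or.inl (h ▸ hx))
    · exact Or.inr (h ▸ hx)
  have h0 : k ≠ l₀ := fun h => hns (hsub.trans (hmem k (Or.inl h)))
  have h1 : k ≠ (l₀ + (N - 1)) % N := fun h => hns (hsub.trans (hmem k (Or.inr (Or.inl h))))
  have h2 : k ≠ (l₀ + 1) % N := fun h => hns (hsub.trans (hmem k (Or.inr (Or.inr h))))
  obtain ⟨hr2, hr3⟩ := natlem N l₀ k hl₀ hkN h0 h1 h2
  rw [← hrdef] at hr2 hr3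
  have hc : 2 ≤ min r (N - r) := by omega
  refine ⟨hc, ?_⟩
  have hNcast : ((N:ℕ):ℝ) = (2:ℝ)^m := by rw [hNdef]; push_cast; ring
  haveI : Nonempty ↥(dyadicI (m+d) l) := (dyadicI_nonempty (m+d) l).to_subtype
  apply le_ciInf
  rintro ⟨x, hx⟩
  have hxk : x ∈ Set.Icc ((k:ℝ)/((N:ℕ):ℝ)) (((k:ℝ)+1)/((N:ℕ):ℝ)) := by
    rw [hNcast]; exact hsub hx
  have hθ' : θ ∈ Set.Icc ((l₀:ℝ)/((N:ℕ):ℝ)) (((l₀:ℝ)+1)/((N:ℕ):ℝ)) := by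
    rw [hNcast]; exact hθ
  rcases le_or_gt l₀ k with hcase | hcase
  · have he : r = k - l₀ := by
      have h : k + (N - l₀) = (k - l₀) + N := by omega
      rw [hrdef, h, Nat.add_mod_right, Nat.mod_eq_of_lt (by omega)]
    have hx' : x ∈ Set.Icc (((l₀:ℝ)+((k - l₀:ℕ):ℝ))/((N:ℕ):ℝ))
        (((l₀:ℝ)+((k - l₀:ℕ):ℝ)+1)/((N:ℕ):ℝ)) := by
      have hck : (l₀:ℝ) + ((k - l₀:ℕ):ℝ) = (k:ℝ) := by
        rw [Nat.cast_sub hcase]; ring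
      rw [hck]; exact hxk
    have := real_gap N l₀ (k - l₀) (by omega) (by omega) θ x hθ' hx'
    have hmin : min (k - l₀) (N - (k - l₀)) = min r (N - r) := by omega
    rw [hmin] at this
    exact this.trans (min_le_circleDist θ x)
  · have he : r = k + (N - l₀) := by
      rw [hrdef]; exact Nat.mod_eq_of_lt (by omega)
    have hθ'' : θ ∈ Set.Icc (((k:ℝ)+((l₀ - k:ℕ):ℝ))/((N:ℕ):ℝ))
        (((k:ℝ)+((l₀ - k:ℕ):ℝ)+1)/((N:ℕ):ℝ)) := by
      have hck : (k:ℝ) + ((l₀ - k:ℕ):ℝ) = (l₀:ℝ) := by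
        rw [Nat.cast_sub hcase.le]; ring
      rw [hck]; exact hθ'
    have := real_gap N k (l₀ - k) (by omega) (by omega) x θ hxk hθ''
    have hmin : min (l₀ - k) (N - (l₀ - k)) = min r (N - r) := by omega
    rw [hmin, abs_sub_comm] at this
    exact this.trans (min_le_circleDist θ x)

lemma sum_div_group (g : ℕ → ℝ) (b : ℕ) (hb : 0 < b) :
    ∀ a, ∑ l ∈ Finset.range (a*b), g (l/b) = ∑ k ∈ Finset.range a, (b:ℝ) * g k := by
  intro a
  induction a with
  | zero => simp
  | succ a ih =>
    have h1 : (a+1)*b = a*b + b := by ring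
    rw [h1, Finset.sum_range_add, ih, Finset.sum_range_succ]
    congr 1
    have h2 : ∀ i ∈ Finset.range b, g ((a*b + i)/b) = g a := by
      intro i hi
      rw [Finset.mem_range] at hi
      congr 1
      rw [mul_comm a b, Nat.mul_add_div hb, Nat.div_eq_of_lt hi]
      omega
    rw [Finset.sum_congr rfl h2, Finset.sum_const, Finset.card_range, nsmul_eq_mul]

lemma sum_shift_mod (N t : ℕ) (ht : t ≤ N) (h : ℕ → ℝ) :
    ∑ k ∈ Finset.range N, h ((k + t) % N) = ∑ r ∈ Finset.range N, h r := by
  rcases Nat.eq_zero_or_pos N with rfl | hN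
  · simp
  refine Finset.sum_nbij' (fun k => (k + t) % N) (fun r => (r + (N - t)) % N) ?_ ?_ ?_ ?_ ?_
  · intro a ha; exact Finset.mem_range.mpr (Nat.mod_lt _ hN)
  · intro a ha; exact Finset.mem_range.mpr (Nat.mod_lt _ hN)
  · intro a ha
    rw [Finset.mem_range] at ha
    show ((a + t) % N + (N - t)) % N = a
    rw [Nat.mod_add_mod]
    have : a + t + (N - t) = a + N := by omega
    rw [this, Nat.add_mod_right, Nat.mod_eq_of_lt ha]
  · intro a ha
    rw [Finset.mem_range] at ha
    show ((a + (N - t)) % N + t) % N = a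
    rw [Nat.mod_add_mod]
    have : a + (N - t) + t = a + N := by omega
    rw [this, Nat.add_mod_right, Nat.mod_eq_of_lt ha]
  · intro a ha; rfl

lemma pseries_half_sum (q : ℝ) (hq : 1/2 < q) (N : ℕ) :
    ∑ r ∈ Finset.range N, ((min r (N - r) - 1 : ℕ):ℝ)^(-(2*q))
      ≤ 2 * ∑' n : ℕ, ((n:ℝ))^(-(2*q)) := by
  set f : ℕ → ℝ := fun n => ((n:ℝ))^(-(2*q)) with hf
  have hfs : Summable f := Real.summable_nat_rpow.mpr (by linarith)
  have hfnn : ∀ n, 0 ≤ f n := fun n => Real.rpow_nonneg (Nat.cast_nonneg n) _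
  have hf0 : f 0 = 0 := by
    simp only [hf, Nat.cast_zero]
    exact Real.zero_rpow (by intro h; nlinarith [h])
  have hS : ∀ N', ∑ r ∈ Finset.range N', f r ≤ ∑' n, f n :=
    fun N' => Summable.sum_le_tsum _ (fun i _ => hfnn i) hfs
  have hshift : ∑ r ∈ Finset.range N, f (r - 1) ≤ ∑' n, f n := by
    rcases N with _ | n
    · simpa using tsum_nonneg hfnn
    · rw [Finset.sum_range_succ' (fun r => f (r - 1)) n]
      simp only [Nat.add_sub_cancel, Nat.zero_sub, hf0, add_zero]
      exact hS n
  have hrefl : ∑ r ∈ Finset.range N, f (N - 1 - r) ≤ ∑' n, f n := by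
    rw [Finset.sum_range_reflect f N]
    exact hS N
  have hbound : ∀ r ∈ Finset.range N, f (min r (N - r) - 1) ≤ f (r - 1) + f (N - 1 - r) := by
    intro r _
    rcases le_total r (N - r) with h | h
    · rw [min_eq_left h]
      exact le_add_of_nonneg_right (hfnn _)
    · rw [min_eq_right h]
      have : N - r - 1 = N - 1 - r := by omega
      rw [this]
      exact le_add_of_nonneg_left (hfnn _)
  calc ∑ r ∈ Finset.range N, f (min r (N - r) - 1)
      ≤ ∑ r ∈ Finset.range N, (f (r - 1) + f (N - 1 - r)) := Finset.sum_le_sum hbound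
    _ = (∑ r ∈ Finset.range N, f (r - 1)) + ∑ r ∈ Finset.range N, f (N - 1 - r) :=
        Finset.sum_add_distrib
    _ ≤ (∑' n, f n) + ∑' n, f n := add_le_add hshift hrefl
    _ = 2 * ∑' n, f n := by ring

lemma dyadicI_sub_unit (m l₀ : ℕ) (h : l₀ + 1 ≤ 2^m) : dyadicI m l₀ ⊆ Set.Icc (0:ℝ) 1 := by
  intro x hx
  obtain ⟨h1, h2⟩ := hx
  have hp : (0:ℝ) < 2^m := by positivity
  constructor
  · exact le_trans (by positivity) h1
  · refine h2.trans ?_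
    rw [div_le_one hp]
    have : ((l₀ + 1 : ℕ):ℝ) ≤ ((2^m : ℕ):ℝ) := by exact_mod_cast h
    push_cast at this
    linarith

lemma scale_bound (q C₁ : ℝ) (hq : 1/2 < q) (hC₁ : 0 < C₁) (m d l₀ : ℕ) (hl₀ : l₀ < 2^m)
    (ψ : ℕ → ℕ → ℝ → ℝ)
    (hψ : ∀ j, m ≤ j → ∀ l < 2 ^ j, ∀ θ ∈ Set.Icc (0:ℝ) 1,
      |ψ j l θ| ≤ C₁ * (1 + 2 ^ j * circleDistToSet θ (dyadicI j l)) ^ (-q))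
    (θ : ℝ) (hθ : θ ∈ dyadicI m l₀) :
    ∑ l ∈ (Finset.range (2^(m+d))).filter (fun l => ¬ dyadicI (m+d) l ⊆ tripleI m l₀),
        (ψ (m+d) l θ)^2
      ≤ C₁^2 * (2 * ∑' n : ℕ, ((n:ℝ))^(-(2*q))) * ((2:ℝ)^((1:ℝ)-2*q))^d := by
  have hθ01 : θ ∈ Set.Icc (0:ℝ) 1 := dyadicI_sub_unit m l₀ hl₀ hθ
  set N := 2^m with hNdef
  set f : ℕ → ℝ := fun n => ((n:ℝ))^(-(2*q)) with hf
  set F : ℕ → ℝ := fun k => f (min ((k + (N - l₀)) % N) (N - (k + (N - l₀)) % N) - 1) with hF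
  have hFnn : ∀ k, 0 ≤ F k := fun k => Real.rpow_nonneg (Nat.cast_nonneg _) _
  have hCd : (0:ℝ) ≤ ((2:ℝ)^d)^(-(2*q)) := Real.rpow_nonneg (by positivity) _
  -- step A: per-term bound
  have hterm : ∀ l ∈ (Finset.range (2^(m+d))).filter
      (fun l => ¬ dyadicI (m+d) l ⊆ tripleI m l₀),
      (ψ (m+d) l θ)^2 ≤ C₁^2 * ((2:ℝ)^d)^(-(2*q)) * F (l / 2^d) := by
    intro l hlmem
    rw [Finset.mem_filter, Finset.mem_range] at hlmem
    obtain ⟨hl, hns⟩ := hlmem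
    obtain ⟨hc2, hcD⟩ := key m d l₀ l hl₀ hl hns θ hθ
    set c := min ((l/2^d + (N - l₀)) % N) (N - (l/2^d + (N - l₀)) % N) with hc
    set D := circleDistToSet θ (dyadicI (m+d) l) with hD
    set X : ℝ := 1 + 2^(m+d) * D with hX
    have hD0 : 0 ≤ D := circleDistToSet_nonneg θ _
    have hX0 : (0:ℝ) ≤ X := by rw [hX]; positivity
    have hc1 : (1:ℝ) ≤ ((c - 1 : ℕ):ℝ) := by exact_mod_cast (by omega : 1 ≤ c - 1)
    have hpos : (0:ℝ) < (2:ℝ)^d * ((c - 1:ℕ):ℝ) := by positivity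
    have hNc : ((N:ℕ):ℝ) = (2:ℝ)^m := by rw [hNdef]; push_cast; ring
    have hle : (2:ℝ)^d * ((c - 1:ℕ):ℝ) ≤ X := by
      have h1 : (2:ℝ)^d * ((c - 1:ℕ):ℝ) = 2^(m+d) * (((c - 1:ℕ):ℝ) / ((N:ℕ):ℝ)) := by
        rw [hNc, pow_add]
        field_simp
      have h2 : (2:ℝ)^(m+d) * (((c - 1:ℕ):ℝ) / ((N:ℕ):ℝ)) ≤ 2^(m+d) * D :=
        mul_le_mul_of_nonneg_left hcD (by positivity)
      rw [hX, h1]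
      linarith
    have habs := hψ (m+d) (Nat.le_add_right m d) l hl θ hθ01
    have h1 : (ψ (m+d) l θ)^2 ≤ (C₁ * X^(-q))^2 := by
      have := abs_le.mp habs
      exact sq_le_sq' (by linarith) (by linarith)
    have h2 : (C₁ * X^(-q))^2 = C₁^2 * (X^(-q))^2 := mul_pow C₁ _ 2
    have h3 : (X^(-q))^2 = X^(-(2*q)) := by
      rw [← Real.rpow_natCast (X^(-q)) 2, ← Real.rpow_mul hX0]
      congr 1
      push_cast
      ring
    have h4 : X^(-(2*q)) ≤ ((2:ℝ)^d * ((c - 1:ℕ):ℝ))^(-(2*q)) :=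
      Real.rpow_le_rpow_of_nonpos hpos hle (by linarith)
    have h5 : ((2:ℝ)^d * ((c - 1:ℕ):ℝ))^(-(2*q))
        = ((2:ℝ)^d)^(-(2*q)) * ((c - 1:ℕ):ℝ)^(-(2*q)) :=
      Real.mul_rpow (by positivity) (by positivity)
    calc (ψ (m+d) l θ)^2 ≤ C₁^2 * (X^(-q))^2 := by rw [← h2]; exact h1
    _ = C₁^2 * X^(-(2*q)) := by rw [h3]
    _ ≤ C₁^2 * (((2:ℝ)^d)^(-(2*q)) * ((c - 1:ℕ):ℝ)^(-(2*q))) := by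
        rw [← h5]; exact mul_le_mul_of_nonneg_left h4 (by positivity)
    _ = C₁^2 * ((2:ℝ)^d)^(-(2*q)) * F (l / 2^d) := by rw [hF]; ring
  -- step B: sum up
  have hb : 0 < 2^d := Nat.pow_pos (by norm_num)
  have hsplit : 2^(m+d) = N * 2^d := by rw [hNdef, pow_add]
  calc ∑ l ∈ (Finset.range (2^(m+d))).filter (fun l => ¬ dyadicI (m+d) l ⊆ tripleI m l₀),
        (ψ (m+d) l θ)^2
      ≤ ∑ l ∈ (Finset.range (2^(m+d))).filter (fun l => ¬ dyadicI (m+d) l ⊆ tripleI m l₀),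
        C₁^2 * ((2:ℝ)^d)^(-(2*q)) * F (l / 2^d) := Finset.sum_le_sum hterm
    _ ≤ ∑ l ∈ Finset.range (2^(m+d)), C₁^2 * ((2:ℝ)^d)^(-(2*q)) * F (l / 2^d) := by
        apply Finset.sum_le_sum_of_subset_of_nonneg (Finset.filter_subset _ _)
        intro i _ _
        have := hFnn (i / 2^d)
        positivity
    _ = C₁^2 * ((2:ℝ)^d)^(-(2*q)) * ∑ l ∈ Finset.range (N * 2^d), F (l / 2^d) := by
        rw [hsplit, Finset.mul_sum]
    _ = C₁^2 * ((2:ℝ)^d)^(-(2*q)) * ∑ k ∈ Finset.range N, ((2^d : ℕ):ℝ) * F k := by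
        rw [sum_div_group F (2^d) hb N]
    _ = C₁^2 * ((2:ℝ)^d)^(-(2*q)) * ((2^d:ℕ):ℝ) * ∑ k ∈ Finset.range N, F k := by
        rw [← Finset.mul_sum]; ring
    _ ≤ C₁^2 * ((2:ℝ)^d)^(-(2*q)) * ((2^d:ℕ):ℝ) * (2 * ∑' n : ℕ, ((n:ℝ))^(-(2*q))) := by
        have hA : (0:ℝ) ≤ C₁^2 * ((2:ℝ)^d)^(-(2*q)) * ((2^d:ℕ):ℝ) :=
          mul_nonneg (mul_nonneg (by positivity) hCd) (by positivity)
        apply mul_le_mul_of_nonneg_left _ hA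
        · calc ∑ k ∈ Finset.range N, F k
              = ∑ r ∈ Finset.range N, f (min r (N - r) - 1) := by
                have : ∀ k, F k = (fun r => f (min r (N - r) - 1)) ((k + (N - l₀)) % N) := by
                  intro k; rfl
                rw [Finset.sum_congr rfl (fun k _ => this k)]
                exact sum_shift_mod N (N - l₀) (by omega) (fun r => f (min r (N - r) - 1))
            _ ≤ 2 * ∑' n : ℕ, ((n:ℝ))^(-(2*q)) := pseries_half_sum q hq N
    _ = C₁^2 * (2 * ∑' n : ℕ, ((n:ℝ))^(-(2*q))) * (((2:ℝ)^d)^(-(2*q)) * ((2^d:ℕ):ℝ)) := by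
        ring
    _ = C₁^2 * (2 * ∑' n : ℕ, ((n:ℝ))^(-(2*q))) * ((2:ℝ)^((1:ℝ)-2*q))^d := by
        congr 1
        rw [show ((2:ℝ)^((1:ℝ)-2*q))^d = (2:ℝ)^(((1:ℝ)-2*q)*(d:ℝ)) from by
            rw [Real.rpow_mul (by norm_num : (0:ℝ) ≤ 2), Real.rpow_natCast],
          show ((2:ℝ)^d)^(-(2*q)) = (2:ℝ)^((d:ℝ)*(-(2*q))) from by
            rw [Real.rpow_mul (by norm_num : (0:ℝ) ≤ 2), Real.rpow_natCast],
          show ((2^d:ℕ):ℝ) = (2:ℝ)^((d:ℝ)) from by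
            push_cast
            exact (Real.rpow_natCast 2 d).symm,
          ← Real.rpow_add (by norm_num : (0:ℝ) < 2)]
        congr 1
        ring

/-- Off-diagonal square-sum bound for vaguelets: if the `ψ_{j,l}` (for
`j ≥ m`) satisfy the value decay bound with constants `C₁, q` (`q > 1/2`), then for every
dyadic interval `I` of length `2^{-m}` and every `θ ∈ I`, all partial sums of
`Σ_{j ≥ m} Σ_{l : J_{j,l} ⊄ 3I} ψ_{j,l}(θ)²` are bounded by a constant `C₀ = C₀(q, C₁)`. -/
theorem offdiagonal_square_sum_bound (q C₁ : ℝ) (hq : 1 / 2 < q) (hC₁ : 0 < C₁) :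
    ∃ C₀ : ℝ, 0 < C₀ ∧
      ∀ (m l₀ : ℕ), l₀ < 2 ^ m →
      ∀ ψ : ℕ → ℕ → ℝ → ℝ,
        (∀ j, m ≤ j → ∀ l < 2 ^ j, ∀ θ ∈ Set.Icc (0:ℝ) 1,
          |ψ j l θ| ≤ C₁ * (1 + 2 ^ j * circleDistToSet θ (dyadicI j l)) ^ (-q)) →
        ∀ θ ∈ dyadicI m l₀, ∀ M : ℕ,
          (∑ d ∈ Finset.range M,
            ∑ l ∈ (Finset.range (2 ^ (m + d))).filter
                (fun l => ¬ dyadicI (m + d) l ⊆ tripleI m l₀),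
              (ψ (m + d) l θ) ^ 2) ≤ C₀ := by
  set S := ∑' n : ℕ, ((n:ℝ))^(-(2*q)) with hS
  set rr := (2:ℝ)^((1:ℝ)-2*q) with hrr
  have hS0 : 0 ≤ S := tsum_nonneg (fun n => Real.rpow_nonneg (Nat.cast_nonneg n) _)
  have hrr0 : 0 ≤ rr := (Real.rpow_pos_of_pos (by norm_num) _).le
  have hrr1 : rr < 1 := Real.rpow_lt_one_of_one_lt_of_neg (by norm_num) (by linarith)
  have hinv : (0:ℝ) ≤ (1 - rr)⁻¹ := inv_nonneg.mpr (by linarith)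
  refine ⟨C₁^2 * (2*S) * (1-rr)⁻¹ + 1, ?_, ?_⟩
  · have h : 0 ≤ C₁^2 * (2*S) * (1-rr)⁻¹ :=
      mul_nonneg (mul_nonneg (by positivity) (by linarith)) hinv
    linarith
  · intro m l₀ hl₀ ψ hψ θ hθ M
    have hgeom : ∑ d ∈ Finset.range M, rr^d ≤ (1-rr)⁻¹ := by
      have h1 := Summable.sum_le_tsum (Finset.range M) (fun i _ => pow_nonneg hrr0 i)
        (summable_geometric_of_lt_one hrr0 hrr1)
      rwa [tsum_geometric_of_lt_one hrr0 hrr1] at h1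
    calc (∑ d ∈ Finset.range M,
            ∑ l ∈ (Finset.range (2 ^ (m + d))).filter
                (fun l => ¬ dyadicI (m + d) l ⊆ tripleI m l₀),
              (ψ (m + d) l θ) ^ 2)
        ≤ ∑ d ∈ Finset.range M, C₁^2 * (2*S) * rr^d :=
          Finset.sum_le_sum (fun d _ => scale_bound q C₁ hq hC₁ m d l₀ hl₀ ψ hψ θ hθ)
      _ = C₁^2 * (2*S) * ∑ d ∈ Finset.range M, rr^d := by rw [Finset.mul_sum]
      _ ≤ C₁^2 * (2*S) * (1-rr)⁻¹ :=
          mul_le_mul_of_nonneg_left hgeom (mul_nonneg (by positivity) (by linarith))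
      _ ≤ C₁^2 * (2*S) * (1-rr)⁻¹ + 1 := by linarith
end

section
/- Let q ≥ 2 and C₁ > 0. There exists a constant C (depending only on q and C₁) such that the following holds. Let δ_i = 2^{−a} and δ_k = 2^{−b} with integers 0 ≤ a ≤ b (so δ_k ≤ δ_i ≤ 1), let I ⊂ [0,1] be an interval of length δ_i, let B ⊂ [0,1] be an interval of length 2δ_k whose distance from I on the circle ℝ/ℤ is at least δ_i/4, and let 𝒞 be the collection of all dyadic subintervals of [0,1] of length at most δ_k that are contained in B. Suppose the functions (ψ_J)_{J∈𝒞} are differentiable and satisfy the vaguelet value and derivative decay bounds with constants C₁ and q. Then for all θ, θ′ ∈ I: Σ_{J∈𝒞} ( ψ_J(θ) − ψ_J(θ′) )² ≤ C·|θ − θ′|·δ_k^{2q−2}/δ_i^{2q−1}. -/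
open MeasureTheory
open scoped Classical

lemma aux_num (q C₁ : ℝ) (hq : 2 ≤ q) (hC₁ : 0 < C₁) (a b d : ℕ) :
    ((2:ℝ)^(d+1) + 1) * (2*C₁^2 * 2^(b+d) * ((2:ℝ)^(b+d) * ((2:ℝ)^(-(a:ℤ))/4))^(-(2*q-1)))
      ≤ (8*C₁^2*(2:ℝ)^(4*q)) * (1/2:ℝ)^d *
        (((2:ℝ)^(-(b:ℤ)))^(2*q-2) / ((2:ℝ)^(-(a:ℤ)))^(2*q-1)) := by
  have h2 : (0:ℝ) < 2 := two_pos
  have hcount : ((2:ℝ)^(d+1) + 1) ≤ (2:ℝ)^(d+2) := by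
    have h1 : (1:ℝ) ≤ 2^(d+1) := one_le_pow₀ one_le_two
    have : (2:ℝ)^(d+2) = 2^(d+1) * 2 := by ring
    linarith
  have hnn : (0:ℝ) ≤ 2*C₁^2 * 2^(b+d) * ((2:ℝ)^(b+d) * ((2:ℝ)^(-(a:ℤ))/4))^(-(2*q-1)) := by
    positivity
  refine le_trans (mul_le_mul_of_nonneg_right hcount hnn) ?_
  have ci : ∀ m : ℤ, (2:ℝ)^m = (2:ℝ) ^ ((m:ℝ)) := fun m => (Real.rpow_intCast 2 m).symm
  have cn : ∀ n : ℕ, (2:ℝ)^n = (2:ℝ) ^ ((n:ℝ)) := fun n => (Real.rpow_natCast 2 n).symm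
  have ebase : (2:ℝ)^(b+d) * ((2:ℝ)^(-(a:ℤ))/4)
      = (2:ℝ) ^ (((b:ℝ)+d + (-(a:ℝ)) + (-2)) : ℝ) := by
    rw [Real.rpow_add h2, Real.rpow_add h2, cn (b+d), ci (-(a:ℤ))]
    push_cast
    rw [show (2:ℝ)^(-2:ℝ) = 1/4 by
      rw [show (-2:ℝ) = ((-2:ℤ):ℝ) by norm_num, Real.rpow_intCast]; norm_num]
    ring
  have merge : ∀ p r s t : ℝ, (2:ℝ)^p * ((2:ℝ)^r * C₁^2 * (2:ℝ)^s * (2:ℝ)^t)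
      = C₁^2 * (2:ℝ)^(p+r+s+t) := by
    intro p r s t
    rw [Real.rpow_add h2, Real.rpow_add h2, Real.rpow_add h2]; ring
  have merge2 : ∀ r s t u : ℝ, (2:ℝ)^r * C₁^2 * (2:ℝ)^s * (2:ℝ)^t * (2:ℝ)^u
      = C₁^2 * (2:ℝ)^(r+s+t+u) := by
    intro r s t u
    rw [Real.rpow_add h2, Real.rpow_add h2, Real.rpow_add h2]; ring
  have lhs_eq : (2:ℝ)^(d+2) * (2*C₁^2 * 2^(b+d) * ((2:ℝ)^(b+d) * ((2:ℝ)^(-(a:ℤ))/4))^(-(2*q-1)))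
      = C₁^2 * (2:ℝ) ^ ((((d:ℝ)+2) + 1 + ((b:ℝ)+d) + (((b:ℝ)+d + (-(a:ℝ)) + (-2)) * (-(2*q-1)))) : ℝ) := by
    rw [ebase, ← Real.rpow_mul h2.le, cn (d+2), cn (b+d),
      show (2:ℝ)*C₁^2 = (2:ℝ)^(1:ℝ)*C₁^2 by norm_num, merge]
    push_cast; ring_nf
  have rhs_eq : (8*C₁^2*(2:ℝ)^(4*q)) * (1/2:ℝ)^d *
        (((2:ℝ)^(-(b:ℤ)))^(2*q-2) / ((2:ℝ)^(-(a:ℤ)))^(2*q-1))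
      = C₁^2 * (2:ℝ) ^ ((3 + 4*q + (-(d:ℝ)) + ((-(b:ℝ))*(2*q-2) - (-(a:ℝ))*(2*q-1))) : ℝ) := by
    rw [ci (-(a:ℤ)), ci (-(b:ℤ)), ← Real.rpow_mul h2.le, ← Real.rpow_mul h2.le,
      ← Real.rpow_sub h2,
      show ((1/2:ℝ))^d = (2:ℝ)^(-(d:ℝ)) by
        rw [show (1/2:ℝ) = (2:ℝ)^(-1:ℝ) by
          rw [show (-1:ℝ) = ((-1:ℤ):ℝ) by norm_num, Real.rpow_intCast]; norm_num,
          ← Real.rpow_natCast ((2:ℝ)^(-1:ℝ)) d, ← Real.rpow_mul h2.le]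
        norm_num,
      show (8:ℝ)*C₁^2 = (2:ℝ)^(3:ℝ)*C₁^2 by
        rw [show (3:ℝ) = ((3:ℕ):ℝ) by norm_num, Real.rpow_natCast]; norm_num,
      merge2]
    push_cast; ring_nf
  rw [lhs_eq, rhs_eq]
  have hd0 : (0:ℝ) ≤ (d:ℝ) := Nat.cast_nonneg d
  refine mul_le_mul_of_nonneg_left ?_ (sq_nonneg C₁)
  rw [Real.rpow_le_rpow_left_iff one_lt_two]
  nlinarith [mul_nonneg hd0 (by linarith : (0:ℝ) ≤ 2*q-4)]

/-- Second-moment bound for increments of the Gaussian field built from the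
vaguelets of the dyadic intervals of length at most `δ_k` contained in an interval `B` of
length `2δ_k`, which is at circle distance at least `δ_i/4` from an interval `I` of length
`δ_i ≥ δ_k`: for `θ, θ' ∈ I`, all partial sums of `Σ_{J ∈ 𝒞} (ψ_J(θ) - ψ_J(θ'))²` are at most
`C |θ - θ'| δ_k^{2q-2}/δ_i^{2q-1}`, with `C = C(q, C₁)`. -/
theorem far_field_increment_bound (q C₁ : ℝ) (hq : 2 ≤ q) (hC₁ : 0 < C₁) :
    ∃ C : ℝ, 0 < C ∧
      ∀ a b : ℕ, a ≤ b →
      ∀ x₁ x₂ : ℝ,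
        Set.Icc x₁ (x₁ + (2:ℝ) ^ (-(a:ℤ))) ⊆ Set.Icc (0:ℝ) 1 →
        Set.Icc x₂ (x₂ + 2 * (2:ℝ) ^ (-(b:ℤ))) ⊆ Set.Icc (0:ℝ) 1 →
        (∀ s ∈ Set.Icc x₁ (x₁ + (2:ℝ) ^ (-(a:ℤ))),
          ∀ u ∈ Set.Icc x₂ (x₂ + 2 * (2:ℝ) ^ (-(b:ℤ))),
            (2:ℝ) ^ (-(a:ℤ)) / 4 ≤ circleDist s u) →
      ∀ ψ : ℕ → ℕ → ℝ → ℝ,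
        (∀ j, b ≤ j → ∀ l < 2 ^ j,
          dyadicI j l ⊆ Set.Icc x₂ (x₂ + 2 * (2:ℝ) ^ (-(b:ℤ))) →
          Differentiable ℝ (ψ j l) ∧
          (∀ θ ∈ Set.Icc (0:ℝ) 1,
            |ψ j l θ| ≤ C₁ * (1 + 2 ^ j * circleDistToSet θ (dyadicI j l)) ^ (-q) ∧
            |deriv (ψ j l) θ| ≤
              C₁ * 2 ^ j * (1 + 2 ^ j * circleDistToSet θ (dyadicI j l)) ^ (-(q - 1)))) →
      ∀ θ ∈ Set.Icc x₁ (x₁ + (2:ℝ) ^ (-(a:ℤ))),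
      ∀ θ' ∈ Set.Icc x₁ (x₁ + (2:ℝ) ^ (-(a:ℤ))),
      ∀ M : ℕ,
        (∑ d ∈ Finset.range M,
          ∑ l ∈ (Finset.range (2 ^ (b + d))).filter
              (fun l => dyadicI (b + d) l ⊆ Set.Icc x₂ (x₂ + 2 * (2:ℝ) ^ (-(b:ℤ)))),
            (ψ (b + d) l θ - ψ (b + d) l θ') ^ 2) ≤
          C * |θ - θ'| * ((2:ℝ) ^ (-(b:ℤ))) ^ (2 * q - 2) / ((2:ℝ) ^ (-(a:ℤ))) ^ (2 * q - 1) := by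
  refine ⟨16 * C₁^2 * (2:ℝ)^(4*q), by positivity, ?_⟩
  intro a b hab x₁ x₂ hI hB hdist ψ hψ θ hθ θ' hθ' M
  have h2 : (0:ℝ) < 2 := two_pos
  have hδipos : (0:ℝ) < (2:ℝ)^(-(a:ℤ)) := by positivity
  have hδkpos : (0:ℝ) < (2:ℝ)^(-(b:ℤ)) := by positivity
  -- circle distance lower bound
  have hDlb : ∀ x ∈ Set.Icc x₁ (x₁ + (2:ℝ)^(-(a:ℤ))), ∀ j l : ℕ,
      dyadicI j l ⊆ Set.Icc x₂ (x₂ + 2 * (2:ℝ)^(-(b:ℤ))) →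
      (2:ℝ)^(-(a:ℤ))/4 ≤ circleDistToSet x (dyadicI j l) := by
    intro x hx j l hsub
    have hne : (dyadicI j l).Nonempty := by
      refine Set.nonempty_Icc.mpr ?_
      gcongr
      linarith
    haveI : Nonempty (dyadicI j l) := hne.to_subtype
    exact le_ciInf fun u => hdist x hx u (hsub u.2)
  -- cardinality bound
  have hcard : ∀ d : ℕ, (((Finset.range (2 ^ (b + d))).filter
        (fun l => dyadicI (b + d) l ⊆ Set.Icc x₂ (x₂ + 2 * (2:ℝ)^(-(b:ℤ))))).card : ℝ)
        ≤ (2:ℝ)^(d+1) + 1 := by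
    intro d
    have hx₂0 : (0:ℝ) ≤ x₂ := (hB ⟨le_rfl, by linarith⟩).1
    set n₀ := ⌊x₂ * 2^(b+d)⌋₊ with hn₀
    have hsub2 : (Finset.range (2 ^ (b + d))).filter
        (fun l => dyadicI (b + d) l ⊆ Set.Icc x₂ (x₂ + 2 * (2:ℝ)^(-(b:ℤ))))
        ⊆ Finset.Icc n₀ (n₀ + 2^(d+1)) := by
      intro l hl
      have hls := (Finset.mem_filter.mp hl).2
      have hAB : ((l:ℝ)) / 2^(b+d) ≤ ((l:ℝ)+1) / 2^(b+d) := by gcongr; linarith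
      rw [dyadicI, Set.Icc_subset_Icc_iff hAB] at hls
      obtain ⟨h1, h2'⟩ := hls
      have hp : (0:ℝ) < (2:ℝ)^(b+d) := by positivity
      have h1' : x₂ * 2^(b+d) ≤ (l:ℝ) := by
        rw [le_div_iff₀ hp] at h1; linarith
      have hδk2 : (2:ℝ)^(-(b:ℤ)) * 2^(b+d) = 2^d := by
        rw [zpow_neg, zpow_natCast, pow_add]
        field_simp
      have h2'' : (l:ℝ) + 1 ≤ x₂ * 2^(b+d) + 2 * 2^d := by
        rw [div_le_iff₀ hp] at h2'
        nlinarith [hδk2]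
      refine Finset.mem_Icc.mpr ⟨?_, ?_⟩
      · have : (n₀:ℝ) ≤ (l:ℝ) := le_trans (Nat.floor_le (by positivity)) h1'
        exact_mod_cast this
      · have hfl : x₂ * 2^(b+d) < (n₀:ℝ) + 1 := Nat.lt_floor_add_one _
        have h3 : (l:ℝ) < (n₀:ℝ) + 2^(d+1) := by
          have : (2:ℝ)^(d+1) = 2 * 2^d := by ring
          linarith
        have h4 : (l:ℝ) < ((n₀ + 2^(d+1) : ℕ) : ℝ) := by push_cast; linarith
        exact_mod_cast le_of_lt h4
    have hcc := Finset.card_le_card hsub2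
    rw [Nat.card_Icc] at hcc
    have h5 : (n₀ + 2^(d+1) + 1 - n₀) = 2^(d+1) + 1 := by rw [add_assoc, Nat.add_sub_cancel_left]
    rw [h5] at hcc
    calc (((Finset.range (2 ^ (b + d))).filter
        (fun l => dyadicI (b + d) l ⊆ Set.Icc x₂ (x₂ + 2 * (2:ℝ)^(-(b:ℤ))))).card : ℝ)
        ≤ ((2^(d+1) + 1 : ℕ) : ℝ) := by exact_mod_cast hcc
      _ = (2:ℝ)^(d+1) + 1 := by push_cast; ring
  -- per-term bound
  have hterm : ∀ d : ℕ, ∀ l ∈ (Finset.range (2 ^ (b + d))).filter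
      (fun l => dyadicI (b + d) l ⊆ Set.Icc x₂ (x₂ + 2 * (2:ℝ)^(-(b:ℤ)))),
      (ψ (b + d) l θ - ψ (b + d) l θ') ^ 2 ≤
        2*C₁^2 * 2^(b+d) * ((2:ℝ)^(b+d) * ((2:ℝ)^(-(a:ℤ))/4))^(-(2*q-1)) * |θ - θ'| := by
    intro d l hl
    obtain ⟨hlr, hls⟩ := Finset.mem_filter.mp hl
    obtain ⟨hdiff, hbounds⟩ := hψ (b+d) (Nat.le_add_right b d) l (Finset.mem_range.mp hlr) hls
    set t := (2:ℝ)^(b+d) * ((2:ℝ)^(-(a:ℤ))/4) with htdef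
    have htpos : (0:ℝ) < t := by positivity
    have hval : ∀ x ∈ Set.Icc x₁ (x₁ + (2:ℝ)^(-(a:ℤ))), |ψ (b+d) l x| ≤ C₁ * t^(-q) := by
      intro x hx
      obtain ⟨hv, _⟩ := hbounds x (hI hx)
      refine hv.trans (mul_le_mul_of_nonneg_left ?_ hC₁.le)
      refine Real.rpow_le_rpow_of_nonpos htpos ?_ (by linarith)
      have hD := hDlb x hx (b+d) l hls
      nlinarith [mul_nonneg (pow_pos h2 (b+d)).le (sub_nonneg.mpr hD)]
    have hder : ∀ x ∈ Set.Icc x₁ (x₁ + (2:ℝ)^(-(a:ℤ))),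
        ‖deriv (ψ (b+d) l) x‖ ≤ C₁ * 2^(b+d) * t^(-(q-1)) := by
      intro x hx
      obtain ⟨_, hd'⟩ := hbounds x (hI hx)
      rw [Real.norm_eq_abs]
      refine hd'.trans (mul_le_mul_of_nonneg_left ?_ (by positivity))
      refine Real.rpow_le_rpow_of_nonpos htpos ?_ (by linarith)
      have hD := hDlb x hx (b+d) l hls
      nlinarith [mul_nonneg (pow_pos h2 (b+d)).le (sub_nonneg.mpr hD)]
    have hmvt : |ψ (b+d) l θ - ψ (b+d) l θ'| ≤ C₁ * 2^(b+d) * t^(-(q-1)) * |θ - θ'| := by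
      have := Convex.norm_image_sub_le_of_norm_deriv_le
        (fun x _ => (hdiff x : DifferentiableAt ℝ _ x)) hder (convex_Icc _ _) hθ' hθ
      simpa [Real.norm_eq_abs] using this
    have habs : |ψ (b+d) l θ - ψ (b+d) l θ'| ≤ 2 * (C₁ * t^(-q)) := by
      calc |ψ (b+d) l θ - ψ (b+d) l θ'|
          ≤ |ψ (b+d) l θ| + |ψ (b+d) l θ'| := by
            rw [sub_eq_add_neg]
            exact (abs_add_le _ _).trans (by rw [abs_neg])
        _ ≤ C₁ * t^(-q) + C₁ * t^(-q) := add_le_add (hval θ hθ) (hval θ' hθ')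
        _ = 2 * (C₁ * t^(-q)) := by ring
    have h0 : (0:ℝ) ≤ |ψ (b+d) l θ - ψ (b+d) l θ'| := abs_nonneg _
    have key : (ψ (b+d) l θ - ψ (b+d) l θ') ^ 2 ≤
        (C₁ * 2^(b+d) * t^(-(q-1)) * |θ - θ'|) * (2 * (C₁ * t^(-q))) := by
      rw [← sq_abs, sq]
      exact mul_le_mul hmvt habs h0 (by positivity)
    refine key.trans (le_of_eq ?_)
    rw [show (-(2*q-1)) = (-(q-1)) + (-q) by ring, Real.rpow_add htpos]
    ring
  -- per-scale bound
  have hsum : ∀ d : ℕ, (∑ l ∈ (Finset.range (2 ^ (b + d))).filter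
        (fun l => dyadicI (b + d) l ⊆ Set.Icc x₂ (x₂ + 2 * (2:ℝ)^(-(b:ℤ)))),
        (ψ (b + d) l θ - ψ (b + d) l θ') ^ 2) ≤
      (8*C₁^2*(2:ℝ)^(4*q)) * (1/2:ℝ)^d *
        (((2:ℝ)^(-(b:ℤ)))^(2*q-2) / ((2:ℝ)^(-(a:ℤ)))^(2*q-1)) * |θ - θ'| := by
    intro d
    have hB0 : (0:ℝ) ≤ 2*C₁^2 * 2^(b+d) * ((2:ℝ)^(b+d) * ((2:ℝ)^(-(a:ℤ))/4))^(-(2*q-1)) * |θ - θ'| := by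
      positivity
    have h1 := Finset.sum_le_card_nsmul _ _ _ (hterm d)
    rw [nsmul_eq_mul] at h1
    refine h1.trans ?_
    calc _ ≤ ((2:ℝ)^(d+1) + 1) * (2*C₁^2 * 2^(b+d) * ((2:ℝ)^(b+d) * ((2:ℝ)^(-(a:ℤ))/4))^(-(2*q-1)) * |θ - θ'|) :=
          mul_le_mul_of_nonneg_right (hcard d) hB0
      _ = (((2:ℝ)^(d+1) + 1) * (2*C₁^2 * 2^(b+d) * ((2:ℝ)^(b+d) * ((2:ℝ)^(-(a:ℤ))/4))^(-(2*q-1)))) * |θ - θ'| := by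
          ring
      _ ≤ ((8*C₁^2*(2:ℝ)^(4*q)) * (1/2:ℝ)^d *
          (((2:ℝ)^(-(b:ℤ)))^(2*q-2) / ((2:ℝ)^(-(a:ℤ)))^(2*q-1))) * |θ - θ'| :=
          mul_le_mul_of_nonneg_right (aux_num q C₁ hq hC₁ a b d) (abs_nonneg _)
  calc (∑ d ∈ Finset.range M,
        ∑ l ∈ (Finset.range (2 ^ (b + d))).filter
            (fun l => dyadicI (b + d) l ⊆ Set.Icc x₂ (x₂ + 2 * (2:ℝ)^(-(b:ℤ)))),
          (ψ (b + d) l θ - ψ (b + d) l θ') ^ 2)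
      ≤ ∑ d ∈ Finset.range M, (8*C₁^2*(2:ℝ)^(4*q)) * (1/2:ℝ)^d *
          (((2:ℝ)^(-(b:ℤ)))^(2*q-2) / ((2:ℝ)^(-(a:ℤ)))^(2*q-1)) * |θ - θ'| :=
        Finset.sum_le_sum (fun d _ => hsum d)
    _ = ∑ d ∈ Finset.range M, ((8*C₁^2*(2:ℝ)^(4*q)) *
          (((2:ℝ)^(-(b:ℤ)))^(2*q-2) / ((2:ℝ)^(-(a:ℤ)))^(2*q-1)) * |θ - θ'|) * (1/2:ℝ)^d :=
        Finset.sum_congr rfl (fun d _ => by ring)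
    _ = ((8*C₁^2*(2:ℝ)^(4*q)) *
          (((2:ℝ)^(-(b:ℤ)))^(2*q-2) / ((2:ℝ)^(-(a:ℤ)))^(2*q-1)) * |θ - θ'|) *
        ∑ d ∈ Finset.range M, (1/2:ℝ)^d := by rw [Finset.mul_sum]
    _ ≤ ((8*C₁^2*(2:ℝ)^(4*q)) *
          (((2:ℝ)^(-(b:ℤ)))^(2*q-2) / ((2:ℝ)^(-(a:ℤ)))^(2*q-1)) * |θ - θ'|) * 2 :=
        mul_le_mul_of_nonneg_left (sum_geometric_two_le M) (by positivity)
    _ = 16 * C₁^2 * (2:ℝ)^(4*q) * |θ - θ'| * ((2:ℝ)^(-(b:ℤ)))^(2*q-2) / ((2:ℝ)^(-(a:ℤ)))^(2*q-1) := by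
        ring
end

section
/- Let q > 2 and C₁ > 0. There is a constant C (depending only on q and C₁) such that the following holds. Let 0 ≤ l₁ < l₀ be integers, and let (a_{l,m}), indexed by integers l ≥ l₀ and 1 ≤ m ≤ 2^{l−l₀}, be a jointly independent family of centered real Gaussian random variables, each of variance at most 2. Let b_{l,m} be constants with 0 ≤ b_{l,m} ≤ C₁·2^{−q(l−l₁)}. Then for every λ > 0: P( Σ_{l≥l₀} Σ_{m=1}^{2^{l−l₀}} b_{l,m} |a_{l,m}| ≥ λ·2^{−q(l₀−l₁)/2} ) ≤ C·e^{−λ²/C}. -/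
open MeasureTheory ProbabilityTheory

open Real in
lemma gauss_tail (v : NNReal) (hv : (v : ℝ) ≤ 2) (x : ℝ) (hx : 0 < x) :
    gaussianReal 0 v {y : ℝ | x ≤ |y|} ≤ ENNReal.ofReal (2 * Real.exp (-x ^ 2 / 8)) := by
  by_cases h0 : v = 0
  · subst h0
    rw [gaussianReal_zero_var]
    have hs : MeasurableSet {y : ℝ | x ≤ |y|} :=
      measurableSet_le measurable_const measurable_abs
    rw [Measure.dirac_apply' 0 hs]
    have h00 : (0:ℝ) ∉ {y : ℝ | x ≤ |y|} := by
      simp only [Set.mem_setOf_eq, abs_zero, not_le]; exact hx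
    rw [Set.indicator_of_notMem h00]
    exact zero_le
  · have hvpos : (0:ℝ) < (v:ℝ) := NNReal.coe_pos.mpr (pos_iff_ne_zero.mpr h0)
    have h2v : (2 * v : NNReal) ≠ 0 := by simp [h0]
    set K : ℝ := Real.sqrt 2 * Real.exp (-x ^ 2 / (4 * v)) with hK
    have hKnn : 0 ≤ K := by positivity
    have hc2v : ((2 * v : NNReal) : ℝ) = 2 * (v:ℝ) := by push_cast; ring
    have hsq : Real.sqrt (2 * π * ((2 * v : NNReal) : ℝ))
        = Real.sqrt 2 * Real.sqrt (2 * π * v) := by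
      rw [← Real.sqrt_mul (by norm_num), hc2v]; ring_nf
    have hs2 : Real.sqrt 2 ≠ 0 := by positivity
    have hpt : ∀ y ∈ {y : ℝ | x ≤ |y|},
        gaussianPDFReal 0 v y ≤ K * gaussianPDFReal 0 (2 * v) y := by
      intro y hy
      have hxy : x ^ 2 ≤ y ^ 2 := by
        have hle : x ≤ |y| := hy
        calc x ^ 2 ≤ |y| ^ 2 := by nlinarith [abs_nonneg y]
          _ = y ^ 2 := sq_abs y
      have hform : K * gaussianPDFReal 0 (2 * v) y
          = (Real.sqrt (2 * π * v))⁻¹ *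
            (Real.exp (-x ^ 2 / (4 * v)) * Real.exp (-y ^ 2 / (4 * v))) := by
        simp only [gaussianPDFReal, sub_zero, hK, hc2v]
        have h4 : (2:ℝ) * (2 * (v:ℝ)) = 4 * v := by ring
        have hsq' : Real.sqrt (2*π*(2*(v:ℝ))) = Real.sqrt 2 * Real.sqrt (2*π*(v:ℝ)) := by
          rw [show (2*π*(2*(v:ℝ))) = 2*(2*π*(v:ℝ)) by ring, Real.sqrt_mul (by norm_num)]
        rw [h4, hsq', mul_inv]
        field_simp
      rw [hform]
      simp only [gaussianPDFReal, sub_zero]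
      apply mul_le_mul_of_nonneg_left _ (by positivity)
      rw [← Real.exp_add, ← add_div]
      apply Real.exp_le_exp.mpr
      rw [div_le_div_iff₀ (by positivity) (by positivity)]
      nlinarith [hvpos, hxy]
    have hs : MeasurableSet {y : ℝ | x ≤ |y|} :=
      measurableSet_le measurable_const measurable_abs
    rw [gaussianReal_apply 0 h0]
    have step1 : ∫⁻ y in {y : ℝ | x ≤ |y|}, gaussianPDF 0 v y
        ≤ ∫⁻ y in {y : ℝ | x ≤ |y|}, ENNReal.ofReal (K * gaussianPDFReal 0 (2*v) y) := by
      apply setLIntegral_mono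
      · exact (measurable_gaussianPDFReal 0 (2*v)).const_mul K |>.ennreal_ofReal
      · intro y hy
        exact ENNReal.ofReal_le_ofReal (hpt y hy)
    refine le_trans (step1.trans (setLIntegral_le_lintegral _ _)) ?_
    have step2 : ∫⁻ y, ENNReal.ofReal (K * gaussianPDFReal 0 (2*v) y) = ENNReal.ofReal K := by
      simp_rw [ENNReal.ofReal_mul hKnn]
      rw [lintegral_const_mul _ ((measurable_gaussianPDFReal 0 (2*v)).ennreal_ofReal),
        lintegral_gaussianPDFReal_eq_one 0 h2v, mul_one]
    rw [step2]
    apply ENNReal.ofReal_le_ofReal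
    have h1 : Real.sqrt 2 ≤ 2 := by
      nlinarith [Real.sq_sqrt (by norm_num : (0:ℝ) ≤ 2), Real.sqrt_nonneg 2]
    have h2 : Real.exp (-x ^ 2 / (4 * v)) ≤ Real.exp (-x ^ 2 / 8) := by
      apply Real.exp_le_exp.mpr
      rw [neg_div, neg_div, neg_le_neg_iff]
      apply div_le_div_of_nonneg_left (by positivity) (by positivity) (by linarith)
    calc K ≤ 2 * Real.exp (-x ^ 2 / (4 * v)) :=
        mul_le_mul_of_nonneg_right h1 (Real.exp_nonneg _)
      _ ≤ 2 * Real.exp (-x ^ 2 / 8) := by linarith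

def subIdx (l₀ : ℕ) (p : {p : ℕ × ℕ // l₀ ≤ p.1 ∧ 1 ≤ p.2 ∧ p.2 ≤ 2 ^ (p.1 - l₀)}) :
    Σ k : ℕ, Fin (2 ^ k) :=
  ⟨p.val.1 - l₀, ⟨p.val.2 - 1, by have h := p.prop; omega⟩⟩

lemma subIdx_inj (l₀ : ℕ) : Function.Injective (subIdx l₀) := by
  rintro ⟨⟨la, ma⟩, ha⟩ ⟨⟨lb, mb⟩, hb⟩ h
  have h1 : la - l₀ = lb - l₀ := congrArg Sigma.fst h
  have hla : la = lb := by omega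
  subst hla
  have h2 := eq_of_heq (Sigma.ext_iff.mp h).2
  have h3 : ma - 1 = mb - 1 := congrArg Fin.val h2
  have : ma = mb := by omega
  simp [this]

lemma tsum_sub_le (l₀ : ℕ) (f : ℕ → ENNReal) :
    ∑' p : {p : ℕ × ℕ // l₀ ≤ p.1 ∧ 1 ≤ p.2 ∧ p.2 ≤ 2 ^ (p.1 - l₀)}, f (p.val.1 - l₀)
      ≤ ∑' k : ℕ, (2:ENNReal) ^ k * f k := by
  calc ∑' p : {p : ℕ × ℕ // l₀ ≤ p.1 ∧ 1 ≤ p.2 ∧ p.2 ≤ 2 ^ (p.1 - l₀)}, f (p.val.1 - l₀)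
      = ∑' p : {p : ℕ × ℕ // l₀ ≤ p.1 ∧ 1 ≤ p.2 ∧ p.2 ≤ 2 ^ (p.1 - l₀)},
        (fun σ : Σ k : ℕ, Fin (2 ^ k) => f σ.1) (subIdx l₀ p) := rfl
    _ ≤ ∑' σ : Σ k : ℕ, Fin (2 ^ k), f σ.1 :=
        ENNReal.tsum_comp_le_tsum_of_injective (subIdx_inj l₀) _
    _ = ∑' k : ℕ, ∑' _i : Fin (2 ^ k), f k := ENNReal.tsum_sigma (fun k (_ : Fin (2^k)) => f k)
    _ = ∑' k : ℕ, (2:ENNReal) ^ k * f k := by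
        congr 1; funext k
        rw [tsum_fintype]
        simp [Finset.sum_const, Finset.card_univ, nsmul_eq_mul]

lemma tsum_geom_ofReal (c : ℝ) (hc : 0 ≤ c) :
    ∑' k : ℕ, (2:ENNReal) ^ k * ENNReal.ofReal (c * (4:ℝ)⁻¹ ^ k) = ENNReal.ofReal (2 * c) := by
  have hterm : ∀ k : ℕ, (2:ENNReal) ^ k * ENNReal.ofReal (c * (4:ℝ)⁻¹ ^ k)
      = ENNReal.ofReal (c * (2:ℝ)⁻¹ ^ k) := by
    intro k
    rw [show (2:ENNReal) ^ k = ENNReal.ofReal ((2:ℝ) ^ k) by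
        simp [ENNReal.ofReal_pow], ← ENNReal.ofReal_mul (by positivity)]
    congr 1
    rw [show (2:ℝ) ^ k * (c * (4:ℝ)⁻¹ ^ k) = c * (2 * 4⁻¹ : ℝ) ^ k by rw [mul_pow]; ring]
    norm_num
  simp_rw [hterm]
  rw [← ENNReal.ofReal_tsum_of_nonneg (fun k => by positivity)
    ((summable_geometric_of_lt_one (by norm_num) (by norm_num)).mul_left c)]
  congr 1
  rw [tsum_mul_left, tsum_geometric_of_lt_one (by norm_num) (by norm_num)]
  norm_num; ring

set_option maxHeartbeats 1000000 in
/-- Tail estimate for the decoupling variables `s_{i,k,j}`: for a jointly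
independent family of centered Gaussians `a_{l,m}` (`l ≥ l₀`, `1 ≤ m ≤ 2^{l-l₀}`) of variance
at most `2`, and weights `0 ≤ b_{l,m} ≤ C₁ 2^{-q(l-l₁)}` with `q > 2`, for every `λ > 0`,
`P(Σ_{l,m} b_{l,m} |a_{l,m}| ≥ λ 2^{-q(l₀-l₁)/2}) ≤ C e^{-λ²/C}` with `C = C(q, C₁)`. -/
theorem decoupling_tail_estimate (q C₁ : ℝ) (hq : 2 < q) (hC₁ : 0 < C₁) :
    ∃ C : ℝ, 0 < C ∧
      ∀ l₁ l₀ : ℕ, l₁ < l₀ →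
      ∀ (Ω : Type) [MeasurableSpace Ω] (P : Measure Ω) [IsProbabilityMeasure P],
      ∀ (a : ℕ → ℕ → Ω → ℝ) (b : ℕ → ℕ → ℝ),
        (∀ l m, Measurable (a l m)) →
        iIndepFun
          (fun p : {p : ℕ × ℕ // l₀ ≤ p.1 ∧ 1 ≤ p.2 ∧ p.2 ≤ 2 ^ (p.1 - l₀)} =>
            a p.val.1 p.val.2) P →
        (∀ l m, l₀ ≤ l → 1 ≤ m → m ≤ 2 ^ (l - l₀) →
          ∃ v : NNReal, (v : ℝ) ≤ 2 ∧ Measure.map (a l m) P = gaussianReal 0 v) →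
        (∀ l m, 0 ≤ b l m ∧ b l m ≤ C₁ * (2:ℝ) ^ (-(q * ((l : ℝ) - (l₁ : ℝ))))) →
        ∀ lam : ℝ, 0 < lam →
          P {ω | ENNReal.ofReal (lam * (2:ℝ) ^ (-(q * ((l₀ : ℝ) - (l₁ : ℝ))) / 2)) ≤
              ∑' p : {p : ℕ × ℕ // l₀ ≤ p.1 ∧ 1 ≤ p.2 ∧ p.2 ≤ 2 ^ (p.1 - l₀)},
                ENNReal.ofReal (b p.val.1 p.val.2 * |a p.val.1 p.val.2 ω|)} ≤
            ENNReal.ofReal (C * Real.exp (-lam ^ 2 / C)) := by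
  set β : ℝ := 1 / (4 * C₁) with hβ
  have hβpos : 0 < β := by positivity
  set R : ℝ := (2:ℝ) ^ (q - 2) with hR
  have hR1 : 1 < R := by
    rw [hR]
    exact Real.one_lt_rpow_iff_of_pos (by norm_num) |>.mpr (Or.inl ⟨by norm_num, by linarith⟩)
  set r : ℝ := R ^ 2 with hr
  have hr1 : 1 < r := by rw [hr]; nlinarith
  set γ : ℝ := β ^ 2 / 8 with hγ
  have hγpos : 0 < γ := by rw [hγ]; positivity
  have hγinv : 0 < 1/γ := one_div_pos.mpr hγpos
  set lam₀ : ℝ := Real.sqrt (2 / (γ * (r - 1))) with hlam₀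
  have hlam₀nn : 0 ≤ lam₀ := by rw [hlam₀]; exact Real.sqrt_nonneg _
  have hlam₀sq : lam₀ ^ 2 = 2 / (γ * (r - 1)) := by
    rw [hlam₀]
    exact Real.sq_sqrt (le_of_lt (div_pos two_pos (mul_pos hγpos (by linarith))))
  clear_value β R γ
  refine ⟨4 + 1/γ + lam₀ ^ 2, by nlinarith [sq_nonneg lam₀], ?_⟩
  set C : ℝ := 4 + 1/γ + lam₀ ^ 2 with hC
  clear_value r lam₀ C
  have hCpos : 0 < C := by rw [hC]; nlinarith [sq_nonneg lam₀]
  have hC4 : 4 ≤ C := by rw [hC]; nlinarith [sq_nonneg lam₀]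
  intro l₁ l₀ hl Ω _ P _ a b hmeas _hindep hgauss hb lam hlam
  set δ : ℝ := (l₀ : ℝ) - (l₁ : ℝ) with hδ
  have hδ1 : 1 ≤ δ := by
    rw [hδ]
    have : (l₁:ℝ) + 1 ≤ (l₀:ℝ) := by exact_mod_cast hl
    linarith
  set t : ℝ := (2:ℝ) ^ (-(q * δ) / 2) with ht
  have htpos : 0 < t := by rw [ht]; exact Real.rpow_pos_of_pos (by norm_num) _
  clear_value δ t
  set θ : ℕ → ℝ := fun k => (lam * t / 4) * (4:ℝ)⁻¹ ^ k with hθ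
  have hθpos : ∀ k, 0 < θ k := fun k => by
    rw [hθ]
    have := mul_pos hlam htpos
    positivity
  set X : ℕ → ℝ := fun k => θ k / (C₁ * (2:ℝ) ^ (-(q * (δ + k)))) with hX
  have hBpos : ∀ k : ℕ, (0:ℝ) < C₁ * (2:ℝ) ^ (-(q * (δ + k))) := fun k => by positivity
  have hXpos : ∀ k, 0 < X k := fun k => by
    rw [hX]; exact div_pos (hθpos k) (hBpos k)
  -- lower bound on X
  have hRpos : 0 < R := by linarith
  have hXlb : ∀ k : ℕ, β * lam * R ^ k ≤ X k := by
    intro k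
    rw [hX]
    rw [le_div_iff₀ (hBpos k)]
    have h4inv : (4:ℝ)⁻¹ = (2:ℝ) ^ ((-2 : ℝ)) := by
      rw [show ((-2):ℝ) = -((2:ℕ):ℝ) by norm_num, Real.rpow_neg (by norm_num),
        Real.rpow_natCast]
      norm_num
    have hRk : R ^ k = (2:ℝ) ^ ((q - 2) * (k:ℝ)) := by
      rw [hR, ← Real.rpow_natCast ((2:ℝ) ^ (q-2)) k, ← Real.rpow_mul (by norm_num)]
    have h4k : (4:ℝ)⁻¹ ^ k = (2:ℝ) ^ ((-2 : ℝ) * (k:ℝ)) := by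
      rw [h4inv, ← Real.rpow_natCast ((2:ℝ) ^ ((-2):ℝ)) k, ← Real.rpow_mul (by norm_num)]
    have key : R ^ k * (2:ℝ) ^ (-(q * (δ + k))) ≤ t * (4:ℝ)⁻¹ ^ k := by
      rw [hRk, h4k, ht, ← Real.rpow_add (by norm_num), ← Real.rpow_add (by norm_num)]
      apply Real.rpow_le_rpow_left_iff (by norm_num : (1:ℝ) < 2) |>.mpr
      nlinarith
    calc β * lam * R ^ k * (C₁ * (2:ℝ) ^ (-(q * (δ + k))))
        = (lam / 4) * (R ^ k * (2:ℝ) ^ (-(q * (δ + k)))) := by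
          rw [hβ]; field_simp
      _ ≤ (lam / 4) * (t * (4:ℝ)⁻¹ ^ k) := by
          apply mul_le_mul_of_nonneg_left key (by positivity)
      _ = θ k := by rw [hθ]; ring
  clear_value θ X
  -- event inclusion
  set S := {p : ℕ × ℕ // l₀ ≤ p.1 ∧ 1 ≤ p.2 ∧ p.2 ≤ 2 ^ (p.1 - l₀)} with hS
  set E : S → Set Ω := fun p =>
    {ω | θ (p.val.1 - l₀) ≤ b p.val.1 p.val.2 * |a p.val.1 p.val.2 ω|} with hE
  have hsub : {ω | ENNReal.ofReal (lam * t) ≤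
      ∑' p : S, ENNReal.ofReal (b p.val.1 p.val.2 * |a p.val.1 p.val.2 ω|)} ⊆ ⋃ p, E p := by
    intro ω hω
    by_contra hn
    simp only [Set.mem_iUnion, hE, Set.mem_setOf_eq, not_exists, not_le] at hn
    have hSle : ∑' p : S, ENNReal.ofReal (b p.val.1 p.val.2 * |a p.val.1 p.val.2 ω|)
        ≤ ENNReal.ofReal (2 * (lam * t / 4)) := by
      calc ∑' p : S, ENNReal.ofReal (b p.val.1 p.val.2 * |a p.val.1 p.val.2 ω|)
          ≤ ∑' p : S, ENNReal.ofReal (θ (p.val.1 - l₀)) :=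
            ENNReal.tsum_le_tsum (fun p => ENNReal.ofReal_le_ofReal (le_of_lt (hn p)))
        _ ≤ ∑' k : ℕ, (2:ENNReal) ^ k * ENNReal.ofReal (θ k) :=
            tsum_sub_le l₀ (fun k => ENNReal.ofReal (θ k))
        _ = ∑' k : ℕ, (2:ENNReal) ^ k * ENNReal.ofReal ((lam * t / 4) * (4:ℝ)⁻¹ ^ k) := by
            rw [hθ]
        _ = ENNReal.ofReal (2 * (lam * t / 4)) :=
            tsum_geom_ofReal (lam * t / 4) (le_of_lt (by have := mul_pos hlam htpos; linarith))
    have hlt : ENNReal.ofReal (2 * (lam * t / 4)) < ENNReal.ofReal (lam * t) := by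
      rw [ENNReal.ofReal_lt_ofReal_iff (mul_pos hlam htpos)]
      linarith [mul_pos hlam htpos]
    exact absurd (hω.trans hSle) (not_le.mpr hlt)
  -- per-index bound
  have hper : ∀ p : S, P (E p) ≤
      ENNReal.ofReal (2 * Real.exp (-(X (p.val.1 - l₀)) ^ 2 / 8)) := by
    rintro ⟨⟨l, m⟩, hl₀, hm1, hm2⟩
    obtain ⟨v, hv2, hmap⟩ := hgauss l m hl₀ hm1 hm2
    set k := l - l₀ with hk
    have hcast : (l:ℝ) = (l₀:ℝ) + (k:ℝ) := by
      rw [hk]; push_cast [Nat.cast_sub hl₀]; ring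
    have hBe : C₁ * (2:ℝ) ^ (-(q * ((l:ℝ) - (l₁:ℝ)))) = C₁ * (2:ℝ) ^ (-(q * (δ + k))) := by
      congr 1
      rw [hcast, hδ]; ring_nf
    have hsubset : E ⟨⟨l, m⟩, hl₀, hm1, hm2⟩ ⊆ a l m ⁻¹' {y : ℝ | X k ≤ |y|} := by
      intro ω hω
      have hω' : θ k ≤ b l m * |a l m ω| := hω
      have hble : b l m ≤ C₁ * (2:ℝ) ^ (-(q * (δ + k))) := hBe ▸ (hb l m).2
      have h1 : θ k ≤ (C₁ * (2:ℝ) ^ (-(q * (δ + k)))) * |a l m ω| :=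
        hω'.trans (mul_le_mul_of_nonneg_right hble (abs_nonneg _))
      show X k ≤ |a l m ω|
      rw [hX]
      exact (div_le_iff₀' (hBpos k)).mpr h1
    calc P (E ⟨⟨l, m⟩, hl₀, hm1, hm2⟩) ≤ P (a l m ⁻¹' {y : ℝ | X k ≤ |y|}) :=
        measure_mono hsubset
      _ = gaussianReal 0 v {y : ℝ | X k ≤ |y|} := by
          rw [← hmap, Measure.map_apply (hmeas l m)
            (measurableSet_le measurable_const measurable_abs)]
      _ ≤ ENNReal.ofReal (2 * Real.exp (-(X k) ^ 2 / 8)) :=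
          gauss_tail v hv2 (X k) (hXpos k)
  -- main chain
  have hchain : P {ω | ENNReal.ofReal (lam * t) ≤
      ∑' p : S, ENNReal.ofReal (b p.val.1 p.val.2 * |a p.val.1 p.val.2 ω|)}
      ≤ ∑' k : ℕ, (2:ENNReal) ^ k * ENNReal.ofReal (2 * Real.exp (-(X k) ^ 2 / 8)) := by
    calc P {ω | ENNReal.ofReal (lam * t) ≤
        ∑' p : S, ENNReal.ofReal (b p.val.1 p.val.2 * |a p.val.1 p.val.2 ω|)}
        ≤ P (⋃ p, E p) := measure_mono hsub
      _ ≤ ∑' p : S, P (E p) := measure_iUnion_le E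
      _ ≤ ∑' p : S, ENNReal.ofReal (2 * Real.exp (-(X (p.val.1 - l₀)) ^ 2 / 8)) :=
          ENNReal.tsum_le_tsum hper
      _ ≤ ∑' k : ℕ, (2:ENNReal) ^ k * ENNReal.ofReal (2 * Real.exp (-(X k) ^ 2 / 8)) :=
          tsum_sub_le l₀ _
  show P {ω | ENNReal.ofReal (lam * t) ≤
      ∑' p : S, ENNReal.ofReal (b p.val.1 p.val.2 * |a p.val.1 p.val.2 ω|)}
      ≤ ENNReal.ofReal (C * Real.exp (-lam ^ 2 / C))
  by_cases hcase : lam₀ ≤ lam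
  · -- large lambda
    have hterm : ∀ k : ℕ, 2 * Real.exp (-(X k) ^ 2 / 8)
        ≤ (2 * Real.exp (-(γ * lam ^ 2))) * (4:ℝ)⁻¹ ^ k := by
      intro k
      have h1 : β * lam * R ^ k ≤ X k := hXlb k
      have hRkpos : (0:ℝ) < R ^ k := pow_pos hRpos k
      have hXk2 : γ * lam ^ 2 * r ^ k ≤ (X k) ^ 2 / 8 := by
        have h2 : (β * lam * R ^ k) ^ 2 ≤ (X k) ^ 2 :=
          pow_le_pow_left₀ (mul_nonneg (mul_nonneg hβpos.le hlam.le) hRkpos.le) h1 2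
        have h4 : γ * lam ^ 2 * r ^ k = (β * lam * R ^ k) ^ 2 / 8 := by
          rw [hγ, hr]; ring
        rw [h4]
        linarith [h2]
      have hrk : (1:ℝ) + (r - 1) * k ≤ r ^ k := by
        have h := one_add_mul_le_pow (by linarith : (-2:ℝ) ≤ r - 1) k
        calc (1:ℝ) + (r - 1) * k = 1 + (k:ℝ) * (r - 1) := by ring
          _ ≤ (1 + (r - 1)) ^ k := h
          _ = r ^ k := by ring_nf
      have hlam2 : 2 / (γ * (r - 1)) ≤ lam ^ 2 := by
        rw [← hlam₀sq]
        nlinarith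
      have hglr : 2 ≤ γ * lam ^ 2 * (r - 1) := by
        rw [div_le_iff₀ (by nlinarith)] at hlam2
        nlinarith
      have hexp1 : γ * lam ^ 2 + 2 * k ≤ γ * lam ^ 2 * r ^ k := by
        have h5 : γ * lam ^ 2 * (1 + (r - 1) * k) ≤ γ * lam ^ 2 * r ^ k :=
          mul_le_mul_of_nonneg_left hrk (mul_nonneg hγpos.le (sq_nonneg lam))
        nlinarith [mul_le_mul_of_nonneg_right hglr (Nat.cast_nonneg k : (0:ℝ) ≤ k)]
      have hexp2 : Real.exp (-(X k) ^ 2 / 8) ≤ Real.exp (-(γ * lam ^ 2)) * (4:ℝ)⁻¹ ^ k := by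
        have h6 : Real.exp (-(X k) ^ 2 / 8) ≤ Real.exp (-(γ * lam ^ 2) - 2 * k) := by
          apply Real.exp_le_exp.mpr
          linarith [hXk2, hexp1]
        rw [Real.exp_sub] at h6
        have h7 : Real.exp (-(2 * (k:ℝ))) = (Real.exp (-2)) ^ k := by
          rw [← Real.exp_nat_mul]; ring_nf
        have h8 : Real.exp (-2) ≤ (4:ℝ)⁻¹ := by
          rw [Real.exp_neg]
          have he1 : (2:ℝ) ≤ Real.exp 1 := by
            have := Real.add_one_le_exp (1:ℝ); linarith
          have he2 : (4:ℝ) ≤ Real.exp 2 := by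
            have hee : Real.exp 2 = Real.exp 1 * Real.exp 1 := by
              rw [← Real.exp_add]; norm_num
            nlinarith
          rw [inv_le_inv₀ (Real.exp_pos 2) (by norm_num)]
          exact he2
        have h9 : (Real.exp (-2)) ^ k ≤ (4:ℝ)⁻¹ ^ k :=
          pow_le_pow_left₀ (Real.exp_nonneg _) h8 k
        calc Real.exp (-(X k) ^ 2 / 8)
            ≤ Real.exp (-(γ * lam ^ 2)) / Real.exp (2 * k) := h6
          _ = Real.exp (-(γ * lam ^ 2)) * Real.exp (-(2 * (k:ℝ))) := by
              rw [div_eq_mul_inv, ← Real.exp_neg]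
          _ = Real.exp (-(γ * lam ^ 2)) * (Real.exp (-2)) ^ k := by rw [h7]
          _ ≤ Real.exp (-(γ * lam ^ 2)) * (4:ℝ)⁻¹ ^ k :=
              mul_le_mul_of_nonneg_left h9 (Real.exp_nonneg _)
      nlinarith [Real.exp_nonneg (-(X k) ^ 2 / 8)]
    have hsum : ∑' k : ℕ, (2:ENNReal) ^ k * ENNReal.ofReal (2 * Real.exp (-(X k) ^ 2 / 8))
        ≤ ENNReal.ofReal (2 * (2 * Real.exp (-(γ * lam ^ 2)))) := by
      calc ∑' k : ℕ, (2:ENNReal) ^ k * ENNReal.ofReal (2 * Real.exp (-(X k) ^ 2 / 8))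
          ≤ ∑' k : ℕ, (2:ENNReal) ^ k *
            ENNReal.ofReal ((2 * Real.exp (-(γ * lam ^ 2))) * (4:ℝ)⁻¹ ^ k) :=
            ENNReal.tsum_le_tsum (fun k =>
              mul_le_mul_right (ENNReal.ofReal_le_ofReal (hterm k)) _)
        _ = ENNReal.ofReal (2 * (2 * Real.exp (-(γ * lam ^ 2)))) :=
            tsum_geom_ofReal _ (by positivity)
    refine (hchain.trans hsum).trans (ENNReal.ofReal_le_ofReal ?_)
    have hCγ : 1 / C ≤ γ := by
      rw [div_le_iff₀ hCpos, hC]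
      have h10 : 1 / γ * γ = 1 := by field_simp
      nlinarith [mul_nonneg (sq_nonneg lam₀) hγpos.le]
    have hexp : Real.exp (-(γ * lam ^ 2)) ≤ Real.exp (-lam ^ 2 / C) := by
      apply Real.exp_le_exp.mpr
      rw [neg_div]
      have h11 : lam ^ 2 / C = lam ^ 2 * (1 / C) := by ring
      rw [h11]
      nlinarith [sq_nonneg lam]
    calc 2 * (2 * Real.exp (-(γ * lam ^ 2))) = 4 * Real.exp (-(γ * lam ^ 2)) := by ring
      _ ≤ C * Real.exp (-lam ^ 2 / C) :=
          mul_le_mul hC4 hexp (Real.exp_nonneg _) (by linarith)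
  · -- small lambda
    push_neg at hcase
    have h1 : (1:ENNReal) ≤ ENNReal.ofReal (C * Real.exp (-lam ^ 2 / C)) := by
      rw [ENNReal.one_le_ofReal]
      have hl2 : lam ^ 2 ≤ C := by
        have h12 : lam ^ 2 ≤ lam₀ ^ 2 := by nlinarith
        rw [hC]
        nlinarith
      have hle1 : -lam ^ 2 / C ≥ -1 := by
        rw [ge_iff_le, neg_div, neg_le_neg_iff, div_le_one hCpos]
        exact hl2
      have hexp : Real.exp (-1) ≤ Real.exp (-lam ^ 2 / C) := Real.exp_le_exp.mpr hle1
      have he3 : Real.exp 1 ≤ 3 := by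
        have := Real.exp_one_lt_d9
        linarith
      have hinv : (1:ℝ)/3 ≤ Real.exp (-1) := by
        rw [Real.exp_neg, div_le_iff₀ (by norm_num : (0:ℝ) < 3),
          inv_mul_eq_div, le_div_iff₀ (Real.exp_pos 1)]
        linarith
      calc (1:ℝ) ≤ 4 * (1/3) := by norm_num
        _ ≤ C * Real.exp (-lam ^ 2 / C) := by
            apply mul_le_mul hC4 (hinv.trans hexp) (by norm_num) (by linarith)
    exact le_trans prob_le_one h1
end

section
/- Let M, W, M₁, M₂, Y be random variables on a probability space with M₁ > 0 and M₂ > 0 almost surely, and let c > 0 and q > 0. Assume: W has the same distribution as M; M₁ and M₂ each have the same distribution as M; M₁ and M₂ are independent; Y is independent of the pair (M₁, M₂); and W ≥ c·e^Y·√(M₁·M₂) almost surely. Then E[ M^{−2q} ] ≤ c^{−2q} · E[ e^{−2qY} ] · ( E[ M^{−q} ] )², as an inequality in [0,∞]. -/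
open MeasureTheory ProbabilityTheory

/-- Bootstrapping step for negative moments: if `W ~ M`, `M₁, M₂` are
independent copies of `M` (a.s. positive), `Y` is independent of the pair `(M₁, M₂)`, and
`W ≥ c e^Y √(M₁ M₂)` a.s., then `E[M^{-2q}] ≤ c^{-2q} E[e^{-2qY}] (E[M^{-q}])²` in `[0,∞]`. -/
theorem negative_moment_bootstrap {Ω : Type} [MeasurableSpace Ω]
    (P : Measure Ω) [IsProbabilityMeasure P]
    (M W M₁ M₂ Y : Ω → ℝ)
    (hMmeas : Measurable M) (hWmeas : Measurable W) (hM₁meas : Measurable M₁)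
    (hM₂meas : Measurable M₂) (hYmeas : Measurable Y)
    (hM₁pos : ∀ᵐ ω ∂P, 0 < M₁ ω) (hM₂pos : ∀ᵐ ω ∂P, 0 < M₂ ω)
    (c q : ℝ) (hc : 0 < c) (hq : 0 < q)
    (hWM : IdentDistrib W M P P)
    (hM₁M : IdentDistrib M₁ M P P)
    (hM₂M : IdentDistrib M₂ M P P)
    (hindep : IndepFun M₁ M₂ P)
    (hYindep : IndepFun Y (fun ω => (M₁ ω, M₂ ω)) P)
    (hdom : ∀ᵐ ω ∂P, c * Real.exp (Y ω) * Real.sqrt (M₁ ω * M₂ ω) ≤ W ω) :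
    (∫⁻ ω, ENNReal.ofReal (M ω ^ (-(2 * q))) ∂P) ≤
      ENNReal.ofReal (c ^ (-(2 * q))) *
        (∫⁻ ω, ENNReal.ofReal (Real.exp (-(2 * q) * Y ω)) ∂P) *
        (∫⁻ ω, ENNReal.ofReal (M ω ^ (-q)) ∂P) ^ 2 := by
  -- measurable auxiliary maps
  have hrq : Measurable fun x : ℝ => ENNReal.ofReal (x ^ (-q)) := by measurability
  have hr2q : Measurable fun x : ℝ => ENNReal.ofReal (x ^ (-(2 * q))) := by measurability
  have hfm : Measurable fun y : ℝ => ENNReal.ofReal (Real.exp (-(2 * q) * y)) :=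
    ENNReal.measurable_ofReal.comp (Real.measurable_exp.comp (measurable_id.const_mul _))
  have hgm : Measurable fun p : ℝ × ℝ =>
      ENNReal.ofReal (p.1 ^ (-q)) * ENNReal.ofReal (p.2 ^ (-q)) :=
    (hrq.comp measurable_fst).mul (hrq.comp measurable_snd)
  have hfY : Measurable fun ω => ENNReal.ofReal (Real.exp (-(2 * q) * Y ω)) :=
    hfm.comp hYmeas
  have hg1 : Measurable fun ω => ENNReal.ofReal (M₁ ω ^ (-q)) := hrq.comp hM₁meas
  have hg2 : Measurable fun ω => ENNReal.ofReal (M₂ ω ^ (-q)) := hrq.comp hM₂meas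
  -- step 1: E[M^{-2q}] = E[W^{-2q}]
  have h1 : (∫⁻ ω, ENNReal.ofReal (M ω ^ (-(2 * q))) ∂P)
      = ∫⁻ ω, ENNReal.ofReal (W ω ^ (-(2 * q))) ∂P :=
    ((hWM.comp hr2q).lintegral_eq).symm
  -- step 2: pointwise bound a.e.
  have h2 : ∀ᵐ ω ∂P, ENNReal.ofReal (W ω ^ (-(2 * q))) ≤
      ENNReal.ofReal (c ^ (-(2 * q))) * (ENNReal.ofReal (Real.exp (-(2 * q) * Y ω)) *
        (ENNReal.ofReal (M₁ ω ^ (-q)) * ENNReal.ofReal (M₂ ω ^ (-q)))) := by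
    filter_upwards [hM₁pos, hM₂pos, hdom] with ω h1ω h2ω hdω
    have hMM : 0 < M₁ ω * M₂ ω := mul_pos h1ω h2ω
    have hA : 0 < c * Real.exp (Y ω) * Real.sqrt (M₁ ω * M₂ ω) :=
      mul_pos (mul_pos hc (Real.exp_pos _)) (Real.sqrt_pos.mpr hMM)
    have hle : (W ω) ^ (-(2 * q)) ≤ (c * Real.exp (Y ω) * Real.sqrt (M₁ ω * M₂ ω)) ^ (-(2 * q)) :=
      Real.rpow_le_rpow_of_nonpos hA hdω (by nlinarith)
    have heq : (c * Real.exp (Y ω) * Real.sqrt (M₁ ω * M₂ ω)) ^ (-(2 * q))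
        = c ^ (-(2 * q)) * (Real.exp (-(2 * q) * Y ω) * (M₁ ω ^ (-q) * M₂ ω ^ (-q))) := by
      rw [Real.mul_rpow (by positivity) (Real.sqrt_nonneg _),
        Real.mul_rpow hc.le (Real.exp_pos _).le,
        Real.sqrt_eq_rpow, ← Real.rpow_mul hMM.le, ← Real.exp_mul,
        mul_comm (Y ω), show (1 / 2 : ℝ) * (-(2 * q)) = -q by ring,
        Real.mul_rpow h1ω.le h2ω.le, mul_assoc]
    calc ENNReal.ofReal (W ω ^ (-(2 * q)))
        ≤ ENNReal.ofReal ((c * Real.exp (Y ω) * Real.sqrt (M₁ ω * M₂ ω)) ^ (-(2 * q))) :=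
          ENNReal.ofReal_le_ofReal hle
      _ = _ := by
          rw [heq, ENNReal.ofReal_mul (by positivity), ENNReal.ofReal_mul (by positivity),
            ENNReal.ofReal_mul (by positivity)]
  -- independence of the composed ENNReal-valued variables
  have hindY : IndepFun (fun ω => ENNReal.ofReal (Real.exp (-(2 * q) * Y ω)))
      (fun ω => ENNReal.ofReal (M₁ ω ^ (-q)) * ENNReal.ofReal (M₂ ω ^ (-q))) P :=
    hYindep.comp hfm hgm
  have hind12 : IndepFun (fun ω => ENNReal.ofReal (M₁ ω ^ (-q)))
      (fun ω => ENNReal.ofReal (M₂ ω ^ (-q))) P := hindep.comp hrq hrq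
  -- factorizations
  have hfac1 : (∫⁻ ω, ENNReal.ofReal (Real.exp (-(2 * q) * Y ω)) *
        (ENNReal.ofReal (M₁ ω ^ (-q)) * ENNReal.ofReal (M₂ ω ^ (-q))) ∂P)
      = (∫⁻ ω, ENNReal.ofReal (Real.exp (-(2 * q) * Y ω)) ∂P) *
        ∫⁻ ω, ENNReal.ofReal (M₁ ω ^ (-q)) * ENNReal.ofReal (M₂ ω ^ (-q)) ∂P :=
    lintegral_mul_eq_lintegral_mul_lintegral_of_indepFun hfY (hg1.mul hg2) hindY
  have hfac2 : (∫⁻ ω, ENNReal.ofReal (M₁ ω ^ (-q)) * ENNReal.ofReal (M₂ ω ^ (-q)) ∂P)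
      = (∫⁻ ω, ENNReal.ofReal (M₁ ω ^ (-q)) ∂P) * ∫⁻ ω, ENNReal.ofReal (M₂ ω ^ (-q)) ∂P :=
    lintegral_mul_eq_lintegral_mul_lintegral_of_indepFun hg1 hg2 hind12
  have hid1 : (∫⁻ ω, ENNReal.ofReal (M₁ ω ^ (-q)) ∂P)
      = ∫⁻ ω, ENNReal.ofReal (M ω ^ (-q)) ∂P := (hM₁M.comp hrq).lintegral_eq
  have hid2 : (∫⁻ ω, ENNReal.ofReal (M₂ ω ^ (-q)) ∂P)
      = ∫⁻ ω, ENNReal.ofReal (M ω ^ (-q)) ∂P := (hM₂M.comp hrq).lintegral_eq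
  calc (∫⁻ ω, ENNReal.ofReal (M ω ^ (-(2 * q))) ∂P)
      = ∫⁻ ω, ENNReal.ofReal (W ω ^ (-(2 * q))) ∂P := h1
    _ ≤ ∫⁻ ω, ENNReal.ofReal (c ^ (-(2 * q))) *
          (ENNReal.ofReal (Real.exp (-(2 * q) * Y ω)) *
            (ENNReal.ofReal (M₁ ω ^ (-q)) * ENNReal.ofReal (M₂ ω ^ (-q)))) ∂P :=
        lintegral_mono_ae h2
    _ = ENNReal.ofReal (c ^ (-(2 * q))) *
          ∫⁻ ω, ENNReal.ofReal (Real.exp (-(2 * q) * Y ω)) *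
            (ENNReal.ofReal (M₁ ω ^ (-q)) * ENNReal.ofReal (M₂ ω ^ (-q))) ∂P :=
        lintegral_const_mul _ (hfY.mul (hg1.mul hg2))
    _ = ENNReal.ofReal (c ^ (-(2 * q))) *
          ((∫⁻ ω, ENNReal.ofReal (Real.exp (-(2 * q) * Y ω)) ∂P) *
            ((∫⁻ ω, ENNReal.ofReal (M ω ^ (-q)) ∂P) *
              ∫⁻ ω, ENNReal.ofReal (M ω ^ (-q)) ∂P)) := by
        rw [hfac1, hfac2, hid1, hid2]
    _ = _ := by rw [sq]; ring
end
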